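/- arXiv:1502.07685 — 8 statements merged into one kernel-verified Lean document; each statement's English description precedes it below -/
import Mathlib

section
/- Let (X₁, ν₁) and (X₂, ν₂) be σ-finite measure spaces and let p be a probability measure on X₁ × X₂ with strictly positive density ρ with respect to ν₁ ⊗ ν₂. Fix a probability measure q₂ on X₂ absolutely continuous with respect to ν₂, and assume h(x₁) := ∫ log ρ(x₁, x₂) dq₂(x₂) is defined ν₁-a.e. with Z₁ := ∫ e^{h(x₁)} dν₁(x₁) ∈ (0, ∞). Let q₁* be the probability measure on X₁ with density e^{h}/Z₁ with respect to ν₁. Then for every probability measure q₁ on X₁ absolutely continuous with respect to ν₁ for which KL(q₁ ⊗ q₂ ‖ p) and all the integrals below are finite, KL(q₁ ⊗ q₂ ‖ p) ≥ KL(q₁* ⊗ q₂ ‖ p), with equality if and only if q₁ = q₁*. -/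
open MeasureTheory Real
open scoped ENNReal

/-- Kullback–Leibler divergence `KL(q ‖ p) = ∫ log (dq/dp) dq`. -/
noncomputable def KLdiv {α : Type*} [MeasurableSpace α] (q p : Measure α) : ℝ :=
  ∫ x, Real.log ((q.rnDeriv p) x).toReal ∂q


lemma ennreal_mul_inv_le_one (a : ℝ≥0∞) : a * a⁻¹ ≤ 1 := by
  rcases eq_or_ne a 0 with rfl | h0
  · simp
  rcases eq_or_ne a ⊤ with rfl | ht
  · simp
  · rw [ENNReal.mul_inv_cancel h0 ht]

lemma gibbs {α : Type*} [MeasurableSpace α] (μ ν : Measure α)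
    [IsProbabilityMeasure μ] [IsProbabilityMeasure ν] (hμν : μ ≪ ν)
    (hint : Integrable (fun x => Real.log (μ.rnDeriv ν x).toReal) μ) :
    0 ≤ ∫ x, Real.log (μ.rnDeriv ν x).toReal ∂μ ∧
      ((∫ x, Real.log (μ.rnDeriv ν x).toReal ∂μ) = 0 ↔ μ = ν) := by
  set d : α → ℝ≥0∞ := μ.rnDeriv ν with hd
  set g : α → ℝ := fun x => (d x).toReal with hg
  have hdmeas : Measurable d := Measure.measurable_rnDeriv μ ν
  have hgmeas : Measurable g := hdmeas.ennreal_toReal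
  have hpos : ∀ᵐ x ∂μ, 0 < d x := Measure.rnDeriv_pos hμν
  have hfin : ∀ᵐ x ∂μ, d x < ⊤ := (Measure.rnDeriv_lt_top μ ν).filter_mono hμν.ae_le
  have hgpos : ∀ᵐ x ∂μ, 0 < g x := by
    filter_upwards [hpos, hfin] with x h1 h2
    exact ENNReal.toReal_pos h1.ne' h2.ne
  -- lintegral of inverse is ≤ 1
  have hlinv : ∫⁻ x, (d x)⁻¹ ∂μ ≤ 1 := by
    rw [← lintegral_rnDeriv_mul hμν (f := fun x => (d x)⁻¹) (hdmeas.inv).aemeasurable]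
    calc ∫⁻ x, d x * (d x)⁻¹ ∂ν ≤ ∫⁻ _, 1 ∂ν :=
          lintegral_mono fun x => ennreal_mul_inv_le_one _
      _ = 1 := by simp
  have hae_ofReal : ∀ᵐ x ∂μ, ENNReal.ofReal (g x)⁻¹ = (d x)⁻¹ := by
    filter_upwards [hpos, hfin] with x h1 h2
    rw [← ENNReal.toReal_inv, ENNReal.ofReal_toReal (by simp [h2.ne, h1.ne'])]
  have hlinv' : ∫⁻ x, ENNReal.ofReal (g x)⁻¹ ∂μ ≤ 1 := by
    rw [lintegral_congr_ae hae_ofReal]; exact hlinv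
  have hinv_int : Integrable (fun x => (g x)⁻¹) μ := by
    refine ⟨(hgmeas.inv).aestronglyMeasurable, ?_⟩
    rw [hasFiniteIntegral_iff_norm]
    calc ∫⁻ x, ENNReal.ofReal ‖(g x)⁻¹‖ ∂μ = ∫⁻ x, ENNReal.ofReal (g x)⁻¹ ∂μ := by
          refine lintegral_congr fun x => by
            rw [Real.norm_eq_abs, abs_of_nonneg (inv_nonneg.2 ENNReal.toReal_nonneg)]
      _ ≤ 1 := hlinv'
      _ < ⊤ := ENNReal.one_lt_top
  set I : ℝ := ∫ x, (g x)⁻¹ ∂μ with hI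
  have hI_eq : ENNReal.ofReal I = ∫⁻ x, ENNReal.ofReal (g x)⁻¹ ∂μ := by
    rw [hI, integral_eq_lintegral_of_nonneg_ae
      (Filter.Eventually.of_forall fun x => inv_nonneg.2 ENNReal.toReal_nonneg)
      (hgmeas.inv).aestronglyMeasurable, ENNReal.ofReal_toReal]
    exact (lt_of_le_of_lt hlinv' ENNReal.one_lt_top).ne
  have hI_le : I ≤ 1 := by
    have := hI_eq ▸ hlinv'
    have h2 := ENNReal.ofReal_le_one.mp this
    exact h2
  have hkey : ∀ᵐ x ∂μ, 1 - (g x)⁻¹ ≤ Real.log (g x) := by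
    filter_upwards [hgpos] with x hx
    have := Real.log_le_sub_one_of_pos (inv_pos.2 hx)
    rw [Real.log_inv] at this
    linarith
  have hint1 : Integrable (fun x => 1 - (g x)⁻¹) μ := (integrable_const 1).sub hinv_int
  have hmain : 1 - I ≤ ∫ x, Real.log (g x) ∂μ := by
    have := integral_mono_ae hint1 hint hkey
    rwa [integral_sub (integrable_const 1) hinv_int, integral_const, probReal_univ,
      smul_eq_mul, one_mul] at this
  constructor
  · linarith
  constructor
  · -- equality implies μ = ν
    intro h0
    have hIge : 1 ≤ I := by linarith
    have hIeq : I = 1 := le_antisymm hI_le hIge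
    -- φ = g⁻¹ - 1 + log g  is nonneg a.e. with zero integral
    have hφint : Integrable (fun x => (g x)⁻¹ - 1 + Real.log (g x)) μ :=
      (hinv_int.sub (integrable_const 1)).add hint
    have hφ0 : (∫ x, ((g x)⁻¹ - 1 + Real.log (g x)) ∂μ) = 0 := by
      have e1 : (∫ x, ((g x)⁻¹ - 1) ∂μ) = I - 1 := by
        rw [integral_sub hinv_int (integrable_const 1)]
        simp [hI]
      have e2 : (∫ x, (((g x)⁻¹ - 1) + Real.log (g x)) ∂μ)
          = (∫ x, ((g x)⁻¹ - 1) ∂μ) + ∫ x, Real.log (g x) ∂μ :=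
        integral_add (hinv_int.sub (integrable_const 1)) hint
      rw [e2, e1, h0, hIeq]
      ring
    have hφnn : 0 ≤ᵐ[μ] fun x => (g x)⁻¹ - 1 + Real.log (g x) := by
      filter_upwards [hkey] with x hx
      simp only [Pi.zero_apply]; linarith
    have hφae : (fun x => (g x)⁻¹ - 1 + Real.log (g x)) =ᵐ[μ] 0 :=
      (integral_eq_zero_iff_of_nonneg_ae hφnn hφint).mp hφ0
    have hg1 : ∀ᵐ x ∂μ, g x = 1 := by
      filter_upwards [hφae, hgpos] with x hx hxpos
      by_contra hne
      have hlt := Real.log_lt_sub_one_of_pos (inv_pos.2 hxpos) (by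
        simpa [inv_eq_one] using hne)
      rw [Real.log_inv] at hlt
      simp only [Pi.zero_apply] at hx
      linarith
    have hd1 : ∀ᵐ x ∂μ, d x = 1 := by
      filter_upwards [hg1, hfin] with x hx hfx
      exact (ENNReal.toReal_eq_one_iff _).mp hx
    -- now: from I = 1, ν-a.e. d ≠ 0
    have hlinv_eq : ∫⁻ x, (d x)⁻¹ ∂μ = 1 := by
      rw [← lintegral_congr_ae hae_ofReal, ← hI_eq, hIeq, ENNReal.ofReal_one]
    have hprod_eq : ∫⁻ x, d x * (d x)⁻¹ ∂ν = 1 := by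
      rw [lintegral_rnDeriv_mul hμν (f := fun x => (d x)⁻¹) (hdmeas.inv).aemeasurable]
      exact hlinv_eq
    have hprod_ae1 : ∀ᵐ x ∂ν, d x * (d x)⁻¹ = 1 := by
      have hle : ∀ x, d x * (d x)⁻¹ ≤ 1 := fun x => ennreal_mul_inv_le_one _
      have hsub : ∫⁻ x, 1 - d x * (d x)⁻¹ ∂ν = 0 := by
        rw [lintegral_sub (μ := ν) (g := fun x => d x * (d x)⁻¹) (hdmeas.mul hdmeas.inv) (by rw [hprod_eq]; exact ENNReal.one_ne_top)
          (Filter.Eventually.of_forall hle)]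
        simp [hprod_eq]
      have := (lintegral_eq_zero_iff (measurable_const.sub (hdmeas.mul hdmeas.inv))).mp hsub
      filter_upwards [this] with x hx
      simp only [Pi.zero_apply] at hx
      exact le_antisymm (hle x) (tsub_eq_zero_iff_le.mp hx)
    have hdne0 : ∀ᵐ x ∂ν, d x ≠ 0 := by
      filter_upwards [hprod_ae1] with x hx h0x
      rw [h0x] at hx; simp at hx
    -- transfer d = 1 from μ-a.e. to ν-a.e.
    have hνd1 : ∀ᵐ x ∂ν, d x = 1 := by
      have hB : μ {x | d x ≠ 1} = 0 := hd1
      have hwd : ν.withDensity d = μ := Measure.withDensity_rnDeriv_eq μ ν hμν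
      have hBmeas : MeasurableSet {x | d x ≠ 1} := (hdmeas (measurableSet_singleton 1)).compl
      have : ∫⁻ x in {x | d x ≠ 1}, d x ∂ν = 0 := by
        rw [← withDensity_apply d hBmeas, hwd]; exact hB
      have hz := (setLIntegral_eq_zero_iff hBmeas hdmeas).mp this
      filter_upwards [hz, hdne0] with x hx hne
      by_contra hne1
      exact hne (hx hne1)
    -- conclude μ = ν
    rw [← Measure.withDensity_rnDeriv_eq μ ν hμν, withDensity_congr_ae hνd1]
    simp
  · intro heq
    subst heq
    have : (fun x => Real.log (g x)) =ᵐ[μ] 0 := by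
      filter_upwards [Measure.rnDeriv_self μ] with x hx
      simp [hg, hd, hx]
    rw [integral_congr_ae this]
    simp



lemma ae_prod_fst {α β : Type*} [MeasurableSpace α] [MeasurableSpace β]
    {μ : Measure α} {ν : Measure β} [SFinite ν] {P : α → Prop}
    (h : ∀ᵐ x ∂μ, P x) : ∀ᵐ y ∂(μ.prod ν), P y.1 :=
  Measure.quasiMeasurePreserving_fst.ae h

lemma ae_prod_snd {α β : Type*} [MeasurableSpace α] [MeasurableSpace β]
    {μ : Measure α} {ν : Measure β} [SFinite μ] [SFinite ν] {P : β → Prop}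
    (h : ∀ᵐ x ∂ν, P x) : ∀ᵐ y ∂(μ.prod ν), P y.2 :=
  Measure.quasiMeasurePreserving_snd.ae h

lemma KL_decomp {X₁ X₂ : Type*} [MeasurableSpace X₁] [MeasurableSpace X₂]
    (ν₁ : Measure X₁) (ν₂ : Measure X₂) [SigmaFinite ν₁] [SigmaFinite ν₂]
    (p : Measure (X₁ × X₂)) [IsProbabilityMeasure p]
    (ρ : X₁ × X₂ → ℝ) (hρmeas : Measurable ρ) (hρpos : ∀ y, 0 < ρ y)
    (hp : p = (ν₁.prod ν₂).withDensity (fun y => ENNReal.ofReal (ρ y)))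
    (q₂ : Measure X₂) [IsProbabilityMeasure q₂] (hq₂ : q₂ ≪ ν₂)
    (h : X₁ → ℝ)
    (hh : ∀ᵐ x₁ ∂ν₁, Integrable (fun x₂ => Real.log (ρ (x₁, x₂))) q₂ ∧
      h x₁ = ∫ x₂, Real.log (ρ (x₁, x₂)) ∂q₂)
    (q₁ : Measure X₁) [IsProbabilityMeasure q₁] (hq₁ : q₁ ≪ ν₁)
    (hint : Integrable (fun y => Real.log (((q₁.prod q₂).rnDeriv p) y).toReal) (q₁.prod q₂)) :
    Integrable (fun x₁ => Real.log (q₁.rnDeriv ν₁ x₁).toReal - h x₁) q₁ ∧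
    KLdiv (q₁.prod q₂) p = (∫ x₁, (Real.log (q₁.rnDeriv ν₁ x₁).toReal - h x₁) ∂q₁)
      + ∫ x₂, Real.log (q₂.rnDeriv ν₂ x₂).toReal ∂q₂ := by
  set f₁ : X₁ → ℝ≥0∞ := q₁.rnDeriv ν₁ with hf₁
  set f₂ : X₂ → ℝ≥0∞ := q₂.rnDeriv ν₂ with hf₂
  have hf₁m : Measurable f₁ := Measure.measurable_rnDeriv _ _
  have hf₂m : Measurable f₂ := Measure.measurable_rnDeriv _ _
  have hkm : Measurable (fun y : X₁ × X₂ => f₁ y.1 * f₂ y.2) :=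
    (hf₁m.comp measurable_fst).mul (hf₂m.comp measurable_snd)
  -- q₁.prod q₂ as density w.r.t. ν₁.prod ν₂
  have hprod : q₁.prod q₂ = (ν₁.prod ν₂).withDensity (fun y => f₁ y.1 * f₂ y.2) := by
    refine Measure.prod_eq fun s t hs ht => ?_
    rw [withDensity_apply _ (hs.prod ht), ← Measure.prod_restrict,
      lintegral_prod_mul (hf₁m.aemeasurable) (hf₂m.aemeasurable),
      Measure.setLIntegral_rnDeriv hq₁ s, Measure.setLIntegral_rnDeriv hq₂ t]
  -- q₁.prod q₂ as density w.r.t. p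
  set g : X₁ × X₂ → ℝ≥0∞ := fun y => f₁ y.1 * f₂ y.2 / ENNReal.ofReal (ρ y) with hgdef
  have hgm : Measurable g := hkm.div (hρmeas.ennreal_ofReal)
  have hq₁p : q₁.prod q₂ = p.withDensity g := by
    rw [hp, ← withDensity_mul _ (hρmeas.ennreal_ofReal) hgm]
    have heq : (fun y => (ENNReal.ofReal (ρ y)) * g y) = fun y => f₁ y.1 * f₂ y.2 := by
      funext y
      exact ENNReal.mul_div_cancel (ENNReal.ofReal_pos.2 (hρpos y)).ne' ENNReal.ofReal_ne_top
    calc q₁.prod q₂ = (ν₁.prod ν₂).withDensity (fun y => f₁ y.1 * f₂ y.2) := hprod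
      _ = (ν₁.prod ν₂).withDensity ((fun y => ENNReal.ofReal (ρ y)) * g) := by
          rw [show ((fun y => ENNReal.ofReal (ρ y)) * g) = fun y => (ENNReal.ofReal (ρ y)) * g y
            from rfl, heq]
  have hac : q₁.prod q₂ ≪ p := hq₁p ▸ withDensity_absolutelyContinuous p g
  have hrn : (q₁.prod q₂).rnDeriv p =ᵐ[p] g := by
    rw [hq₁p]; exact Measure.rnDeriv_withDensity p hgm
  have hrn' : (q₁.prod q₂).rnDeriv p =ᵐ[q₁.prod q₂] g := hrn.filter_mono hac.ae_le
  -- positivity and finiteness a.e.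
  have hf₁pos : ∀ᵐ y ∂(q₁.prod q₂), 0 < f₁ y.1 := ae_prod_fst (Measure.rnDeriv_pos hq₁)
  have hf₁fin : ∀ᵐ y ∂(q₁.prod q₂), f₁ y.1 < ⊤ :=
    ae_prod_fst ((Measure.rnDeriv_lt_top q₁ ν₁).filter_mono hq₁.ae_le)
  have hf₂pos : ∀ᵐ y ∂(q₁.prod q₂), 0 < f₂ y.2 := ae_prod_snd (Measure.rnDeriv_pos hq₂)
  have hf₂fin : ∀ᵐ y ∂(q₁.prod q₂), f₂ y.2 < ⊤ :=
    ae_prod_snd ((Measure.rnDeriv_lt_top q₂ ν₂).filter_mono hq₂.ae_le)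
  set G : X₁ × X₂ → ℝ := fun y =>
    Real.log (f₁ y.1).toReal + Real.log (f₂ y.2).toReal - Real.log (ρ y) with hGdef
  have haeFG : (fun y => Real.log (((q₁.prod q₂).rnDeriv p) y).toReal) =ᵐ[q₁.prod q₂] G := by
    filter_upwards [hrn', hf₁pos, hf₁fin, hf₂pos, hf₂fin] with y h1 h2 h3 h4 h5
    have h₁pos : 0 < (f₁ y.1).toReal := ENNReal.toReal_pos h2.ne' h3.ne
    have h₂pos : 0 < (f₂ y.2).toReal := ENNReal.toReal_pos h4.ne' h5.ne
    rw [h1]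
    simp only [hgdef]
    rw [ENNReal.toReal_div, ENNReal.toReal_mul, ENNReal.toReal_ofReal (hρpos y).le,
      Real.log_div (by positivity) (hρpos y).ne', Real.log_mul h₁pos.ne' h₂pos.ne']
  have hGint : Integrable G (q₁.prod q₂) := hint.congr haeFG
  have hKL1 : KLdiv (q₁.prod q₂) p = ∫ y, G y ∂(q₁.prod q₂) := integral_congr_ae haeFG
  have hFub : ∫ y, G y ∂(q₁.prod q₂) = ∫ x₁, ∫ x₂, G (x₁, x₂) ∂q₂ ∂q₁ :=
    integral_prod G hGint
  have hsec : ∀ᵐ x₁ ∂q₁, Integrable (fun x₂ => G (x₁, x₂)) q₂ := hGint.prod_right_ae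
  have hhq₁ : ∀ᵐ x₁ ∂q₁, Integrable (fun x₂ => Real.log (ρ (x₁, x₂))) q₂ ∧
      h x₁ = ∫ x₂, Real.log (ρ (x₁, x₂)) ∂q₂ := hh.filter_mono hq₁.ae_le
  haveI : (ae q₁).NeBot := ae_neBot.mpr (IsProbabilityMeasure.ne_zero q₁)
  have hlogf₂int : Integrable (fun x₂ => Real.log (f₂ x₂).toReal) q₂ := by
    obtain ⟨x₁, hs, hi, _⟩ := (hsec.and hhq₁).exists
    have heq : (fun x₂ => Real.log (f₂ x₂).toReal)
        = fun x₂ => (G (x₁, x₂) - Real.log (f₁ x₁).toReal) + Real.log (ρ (x₁, x₂)) := by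
      funext x₂; simp only [hGdef]; ring
    rw [heq]
    exact (hs.sub (integrable_const _)).add hi
  set c : ℝ := ∫ x₂, Real.log (f₂ x₂).toReal ∂q₂ with hc
  have hinner : ∀ᵐ x₁ ∂q₁, (∫ x₂, G (x₁, x₂) ∂q₂)
      = (Real.log (f₁ x₁).toReal - h x₁) + c := by
    filter_upwards [hhq₁] with x₁ hhx
    have e1 : (∫ x₂, G (x₁, x₂) ∂q₂)
        = ∫ x₂, ((Real.log (f₁ x₁).toReal + Real.log (f₂ x₂).toReal)
            - Real.log (ρ (x₁, x₂))) ∂q₂ := rfl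
    have hadd : Integrable
        (fun x₂ => Real.log (f₁ x₁).toReal + Real.log (f₂ x₂).toReal) q₂ := by
      exact (integrable_const _).add hlogf₂int
    rw [e1, integral_sub hadd hhx.1,
      integral_add (integrable_const _) hlogf₂int, integral_const, ← hhx.2]
    simp [measure_univ, hc]
    ring
  have hinner_int : Integrable (fun x₁ => ∫ x₂, G (x₁, x₂) ∂q₂) q₁ :=
    hGint.integral_prod_left
  have hint2 : Integrable (fun x₁ => (Real.log (f₁ x₁).toReal - h x₁) + c) q₁ :=
    hinner_int.congr hinner
  have hmain_int : Integrable (fun x₁ => Real.log (f₁ x₁).toReal - h x₁) q₁ := by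
    have := hint2.sub (integrable_const c)
    exact this.congr (Filter.Eventually.of_forall fun x => by simp only [Pi.sub_apply]; ring)
  refine ⟨hmain_int, ?_⟩
  rw [hKL1, hFub, integral_congr_ae hinner, integral_add hmain_int (integrable_const c),
    integral_const]
  simp [measure_univ]


/-- **Coordinate-wise optimality of the mean field update.**
Let `p` be a probability measure on `X₁ × X₂` with strictly positive density `ρ` with respect to
`ν₁ ⊗ ν₂`, fix a probability measure `q₂ ≪ ν₂`, and let
`h x₁ = ∫ log ρ(x₁, x₂) dq₂(x₂)` (defined `ν₁`-a.e.) with `Z₁ = ∫ e^h dν₁ ∈ (0, ∞)`.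
Let `q₁*` have density `e^h / Z₁` with respect to `ν₁`. Then for every probability measure
`q₁ ≪ ν₁` for which the relevant KL integrals are finite (integrable),
`KL(q₁ ⊗ q₂ ‖ p) ≥ KL(q₁* ⊗ q₂ ‖ p)`, with equality iff `q₁ = q₁*`. -/
theorem mfvb_coordinate_update_optimal
    {X₁ X₂ : Type*} [MeasurableSpace X₁] [MeasurableSpace X₂]
    (ν₁ : Measure X₁) (ν₂ : Measure X₂) [SigmaFinite ν₁] [SigmaFinite ν₂]
    (p : Measure (X₁ × X₂)) [IsProbabilityMeasure p]
    (ρ : X₁ × X₂ → ℝ) (hρmeas : Measurable ρ) (hρpos : ∀ y, 0 < ρ y)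
    (hp : p = (ν₁.prod ν₂).withDensity (fun y => ENNReal.ofReal (ρ y)))
    (q₂ : Measure X₂) [IsProbabilityMeasure q₂] (hq₂ : q₂ ≪ ν₂)
    (h : X₁ → ℝ)
    (hh : ∀ᵐ x₁ ∂ν₁, Integrable (fun x₂ => Real.log (ρ (x₁, x₂))) q₂ ∧
      h x₁ = ∫ x₂, Real.log (ρ (x₁, x₂)) ∂q₂)
    (hexp : Integrable (fun x₁ => Real.exp (h x₁)) ν₁)
    (Z₁ : ℝ) (hZ : Z₁ = ∫ x₁, Real.exp (h x₁) ∂ν₁) (hZpos : 0 < Z₁)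
    (q₁star : Measure X₁) [IsProbabilityMeasure q₁star]
    (hq₁star : q₁star =
      ν₁.withDensity (fun x₁ => ENNReal.ofReal (Real.exp (h x₁) / Z₁))) :
    ∀ (q₁ : Measure X₁), IsProbabilityMeasure q₁ → q₁ ≪ ν₁ →
      Integrable (fun y => Real.log (((q₁.prod q₂).rnDeriv p) y).toReal) (q₁.prod q₂) →
      Integrable (fun y => Real.log (((q₁star.prod q₂).rnDeriv p) y).toReal) (q₁star.prod q₂) →
      KLdiv (q₁.prod q₂) p ≥ KLdiv (q₁star.prod q₂) p ∧
        (KLdiv (q₁.prod q₂) p = KLdiv (q₁star.prod q₂) p ↔ q₁ = q₁star) := by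
  intro q₁ hq₁prob hq₁ac hint hints
  haveI := hq₁prob
  have hq₁starac : q₁star ≪ ν₁ := hq₁star ▸ withDensity_absolutelyContinuous ν₁ _
  obtain ⟨hint₁, hKL₁⟩ := KL_decomp ν₁ ν₂ p ρ hρmeas hρpos hp q₂ hq₂ h hh q₁ hq₁ac hint
  obtain ⟨hintS, hKLS⟩ := KL_decomp ν₁ ν₂ p ρ hρmeas hρpos hp q₂ hq₂ h hh q₁star hq₁starac hints
  set c : ℝ := ∫ x₂, Real.log (q₂.rnDeriv ν₂ x₂).toReal ∂q₂ with hc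
  -- measurable version of h
  set H : X₁ → ℝ := fun x₁ => ∫ x₂, Real.log (ρ (x₁, x₂)) ∂q₂ with hHdef
  have hHsm : StronglyMeasurable H :=
    StronglyMeasurable.integral_prod_right' (f := fun y => Real.log (ρ y))
      (Real.measurable_log.comp hρmeas).stronglyMeasurable
  have hHmeas : Measurable H := hHsm.measurable
  have hhH : h =ᵐ[ν₁] H := by
    filter_upwards [hh] with x hx
    exact hx.2
  set w' : X₁ → ℝ≥0∞ := fun x => ENNReal.ofReal (Real.exp (H x) / Z₁) with hw'
  have hw'meas : Measurable w' := ((measurable_exp.comp hHmeas).div_const Z₁).ennreal_ofReal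
  have hq₁star' : q₁star = ν₁.withDensity w' := by
    rw [hq₁star]
    exact withDensity_congr_ae (by filter_upwards [hhH] with x hx; rw [hx])
  have hw'ne0 : ∀ x, w' x ≠ 0 :=
    fun x => (ENNReal.ofReal_pos.2 (div_pos (Real.exp_pos _) hZpos)).ne'
  have hw'netop : ∀ x, w' x ≠ ⊤ := fun x => ENNReal.ofReal_ne_top
  -- rnDeriv of q₁star w.r.t. ν₁
  have hfs : q₁star.rnDeriv ν₁ =ᵐ[ν₁] w' := by
    rw [hq₁star']
    exact Measure.rnDeriv_withDensity ν₁ hw'meas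
  have hSae : ∀ᵐ x ∂q₁star, Real.log (q₁star.rnDeriv ν₁ x).toReal - h x = - Real.log Z₁ := by
    filter_upwards [hq₁starac.ae_le hfs, hq₁starac.ae_le hhH] with x h1 h2
    rw [h1, h2, hw']
    rw [ENNReal.toReal_ofReal (div_nonneg (Real.exp_pos _).le hZpos.le),
      Real.log_div (Real.exp_ne_zero _) hZpos.ne', Real.log_exp]
    ring
  have hKLS' : KLdiv (q₁star.prod q₂) p = - Real.log Z₁ + c := by
    rw [hKLS, integral_congr_ae hSae, integral_const]
    simp [measure_univ]
  -- q₁ as density w.r.t. q₁star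
  have hq₁eq : q₁ = q₁star.withDensity (fun x => q₁.rnDeriv ν₁ x / w' x) := by
    have hmdiv : Measurable (fun x => q₁.rnDeriv ν₁ x / w' x) :=
      (Measure.measurable_rnDeriv q₁ ν₁).div hw'meas
    rw [hq₁star', ← withDensity_mul _ hw'meas hmdiv]
    have heq : (fun x => w' x * (q₁.rnDeriv ν₁ x / w' x)) = q₁.rnDeriv ν₁ :=
      funext fun x => ENNReal.mul_div_cancel (hw'ne0 x) (hw'netop x)
    rw [show (w' * fun x => q₁.rnDeriv ν₁ x / w' x)
        = fun x => w' x * (q₁.rnDeriv ν₁ x / w' x) from rfl, heq,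
      Measure.withDensity_rnDeriv_eq q₁ ν₁ hq₁ac]
  have hq₁acs : q₁ ≪ q₁star := hq₁eq ▸ withDensity_absolutelyContinuous q₁star _
  have hrnstar : q₁.rnDeriv q₁star =ᵐ[q₁star] fun x => q₁.rnDeriv ν₁ x / w' x := by
    nth_rw 1 [hq₁eq]
    exact Measure.rnDeriv_withDensity q₁star
      ((Measure.measurable_rnDeriv q₁ ν₁).div hw'meas)
  have hlogrn : ∀ᵐ x ∂q₁, Real.log (q₁.rnDeriv q₁star x).toReal
      = (Real.log (q₁.rnDeriv ν₁ x).toReal - h x) + Real.log Z₁ := by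
    filter_upwards [hq₁acs.ae_le hrnstar, Measure.rnDeriv_pos hq₁ac,
      (Measure.rnDeriv_lt_top q₁ ν₁).filter_mono hq₁ac.ae_le, hq₁ac.ae_le hhH] with x h1 h2 h3 h4
    have hpos : 0 < (q₁.rnDeriv ν₁ x).toReal := ENNReal.toReal_pos h2.ne' h3.ne
    rw [h1, hw', ENNReal.toReal_div,
      ENNReal.toReal_ofReal (div_nonneg (Real.exp_pos _).le hZpos.le),
      Real.log_div hpos.ne' (div_pos (Real.exp_pos _) hZpos).ne',
      Real.log_div (Real.exp_ne_zero _) hZpos.ne', Real.log_exp, h4]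
    ring
  have hKint : Integrable (fun x => Real.log (q₁.rnDeriv q₁star x).toReal) q₁ := by
    have : Integrable
        (fun x => (Real.log (q₁.rnDeriv ν₁ x).toReal - h x) + Real.log Z₁) q₁ :=
      hint₁.add (integrable_const _)
    exact this.congr (hlogrn.mono fun x hx => hx.symm)
  have hKeq : (∫ x, Real.log (q₁.rnDeriv q₁star x).toReal ∂q₁)
      = (∫ x₁, (Real.log (q₁.rnDeriv ν₁ x₁).toReal - h x₁) ∂q₁) + Real.log Z₁ := by
    rw [integral_congr_ae hlogrn, integral_add hint₁ (integrable_const _), integral_const]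
    simp [measure_univ]
  obtain ⟨hK0, hKiff⟩ := gibbs q₁ q₁star hq₁acs hKint
  constructor
  · rw [ge_iff_le, hKLS', hKL₁]
    linarith [hKeq ▸ hK0]
  · constructor
    · intro heq
      apply hKiff.mp
      rw [hKL₁, hKLS'] at heq
      linarith [hKeq]
    · intro heq
      rw [heq]
end

section
/- Let J be a finite index set, let (D_j)_{j∈J} be positive integers, and write Θ = ∏_{j∈J} ℝ^{D_j}. Suppose f : Θ → ℝ is block-affine, i.e., for every j ∈ J and every fixed value of the blocks (θ_k)_{k≠j}, the map θ_j ↦ f(θ) is an affine function of θ_j ∈ ℝ^{D_j}. Then there exist real coefficients G_r, indexed by tuples r = (r_j)_{j∈J} with each r_j ∈ {∅} ∪ {1, …, D_j}, such that for all θ ∈ Θ, f(θ) = Σ_r G_r ∏_{j∈J} θ_{j, r_j}, where by convention θ_{j, ∅} := 1. In particular f is a polynomial containing at most one coordinate factor from each block θ_j in every monomial. -/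
private lemma const_of_invariant {J : Type*} [Fintype J] [DecidableEq J] {D : J → ℕ}
    (f : (∀ j, Fin (D j) → ℝ) → ℝ)
    (hinv : ∀ (j : J) (θ : ∀ j, Fin (D j) → ℝ) (v : Fin (D j) → ℝ),
      f (Function.update θ j v) = f θ)
    (θ θ' : ∀ j, Fin (D j) → ℝ) : f θ = f θ' := by
  have key : ∀ t : Finset J, f (t.piecewise θ' θ) = f θ := by
    intro t
    induction t using Finset.induction with
    | empty => simp
    | @insert j t hj ih =>
        rw [Finset.piecewise_insert, hinv, ih]
  have h := key Finset.univ
  rw [Finset.piecewise_univ] at h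
  exact h.symm

set_option maxHeartbeats 2000000 in
private lemma block_affine_aux {J : Type*} [Fintype J] [DecidableEq J] (D : J → ℕ)
    (s : Finset J) :
    ∀ f : (∀ j, Fin (D j) → ℝ) → ℝ,
      (∀ (j : J) (θ : ∀ j, Fin (D j) → ℝ),
        ∃ (a : Fin (D j) → ℝ) (b : ℝ), ∀ v : Fin (D j) → ℝ,
          f (Function.update θ j v) = (∑ i, a i * v i) + b) →
      (∀ j ∉ s, ∀ (θ : ∀ j, Fin (D j) → ℝ) (v : Fin (D j) → ℝ),
        f (Function.update θ j v) = f θ) →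
      ∃ G : (∀ j, Option (Fin (D j))) → ℝ,
        ∀ θ : ∀ j, Fin (D j) → ℝ,
          f θ = ∑ r : ∀ j, Option (Fin (D j)),
            G r * ∏ j ∈ s, (r j).elim 1 (fun i => θ j i) := by
  induction s using Finset.induction with
  | empty =>
      intro f haff hinv
      set θ₀ : ∀ j, Fin (D j) → ℝ := fun _ _ => 0 with hθ₀
      refine ⟨fun r => if r = (fun _ => none) then f θ₀ else 0, ?_⟩
      intro θ
      have : f θ = f θ₀ := const_of_invariant f (fun j θ v => hinv j (by simp) θ v) θ θ₀
      rw [this]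
      simp only [Finset.prod_empty, mul_one]
      rw [Finset.sum_ite_eq' Finset.univ (fun _ => none) (fun _ => f θ₀)]
      simp
  | @insert j t hj ih =>
      intro f haff hinv
      -- coefficient functions
      set fb : (∀ k, Fin (D k) → ℝ) → ℝ := fun θ => f (Function.update θ j 0) with hfb
      set fa : Fin (D j) → (∀ k, Fin (D k) → ℝ) → ℝ :=
        fun i θ => f (Function.update θ j (Pi.single i 1)) - fb θ with hfa
      have hrep : ∀ (θ : ∀ k, Fin (D k) → ℝ) (v : Fin (D j) → ℝ),
          f (Function.update θ j v) = (∑ i, fa i θ * v i) + fb θ := by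
        intro θ v
        obtain ⟨a, b, hab⟩ := haff j θ
        have hb : fb θ = b := by simpa using hab 0
        have ha : ∀ i, fa i θ = a i := by
          intro i
          have h1 := hab (Pi.single i 1)
          simp only [hfa, h1, hb]
          simp [Pi.single_apply, mul_ite, mul_one, mul_zero, Finset.sum_ite_eq']
        rw [hab v, hb]
        congr 1
        exact Finset.sum_congr rfl fun i _ => by rw [ha i]
      have hf : ∀ θ : ∀ k, Fin (D k) → ℝ,
          f θ = (∑ i, fa i θ * θ j i) + fb θ := by
        intro θ
        conv_lhs => rw [← Function.update_eq_self j θ]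
        exact hrep θ (θ j)
      -- invariance at block j
      have hbj : ∀ (θ : ∀ k, Fin (D k) → ℝ) (v : Fin (D j) → ℝ),
          fb (Function.update θ j v) = fb θ := by
        intro θ v; simp [hfb, Function.update_idem]
      have haj : ∀ i (θ : ∀ k, Fin (D k) → ℝ) (v : Fin (D j) → ℝ),
          fa i (Function.update θ j v) = fa i θ := by
        intro i θ v; simp [hfa, Function.update_idem, hbj]
      -- fb is block-affine
      have hafb : ∀ (k : J) (θ : ∀ k, Fin (D k) → ℝ),
          ∃ (a : Fin (D k) → ℝ) (b : ℝ), ∀ v : Fin (D k) → ℝ,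
            fb (Function.update θ k v) = (∑ i, a i * v i) + b := by
        intro k θ
        by_cases hk : k = j
        · subst hk
          exact ⟨0, fb θ, fun v => by simp [hbj]⟩
        · obtain ⟨a, b, hab⟩ := haff k (Function.update θ j 0)
          refine ⟨a, b, fun v => ?_⟩
          have : fb (Function.update θ k v)
              = f (Function.update (Function.update θ j 0) k v) := by
            simp only [hfb]
            rw [Function.update_comm hk]
          rw [this, hab v]
      -- fa i is block-affine
      have hafa : ∀ i (k : J) (θ : ∀ k, Fin (D k) → ℝ),
          ∃ (a : Fin (D k) → ℝ) (b : ℝ), ∀ v : Fin (D k) → ℝ,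
            fa i (Function.update θ k v) = (∑ m, a m * v m) + b := by
        intro i k θ
        by_cases hk : k = j
        · subst hk
          exact ⟨0, fa i θ, fun v => by simp [haj]⟩
        · obtain ⟨a1, b1, hab1⟩ := haff k (Function.update θ j (Pi.single i 1))
          obtain ⟨a2, b2, hab2⟩ := hafb k θ
          refine ⟨fun m => a1 m - a2 m, b1 - b2, fun v => ?_⟩
          have h1 : fa i (Function.update θ k v)
              = f (Function.update (Function.update θ j (Pi.single i 1)) k v)
                - fb (Function.update θ k v) := by
            simp only [hfa]
            rw [Function.update_comm hk]
          rw [h1, hab1 v, hab2 v]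
          simp only [sub_mul, Finset.sum_sub_distrib]
          ring
      -- fb, fa i do not depend on blocks outside t
      have hinvb : ∀ k ∉ t, ∀ (θ : ∀ k, Fin (D k) → ℝ) (v : Fin (D k) → ℝ),
          fb (Function.update θ k v) = fb θ := by
        intro k hk θ v
        by_cases hkj : k = j
        · subst hkj; exact hbj θ v
        · have hk' : k ∉ insert j t := by simp [hkj, hk]
          simp only [hfb]
          rw [Function.update_comm hkj, hinv k hk']
      have hinva : ∀ i, ∀ k ∉ t, ∀ (θ : ∀ k, Fin (D k) → ℝ) (v : Fin (D k) → ℝ),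
          fa i (Function.update θ k v) = fa i θ := by
        intro i k hk θ v
        by_cases hkj : k = j
        · subst hkj; exact haj i θ v
        · have hk' : k ∉ insert j t := by simp [hkj, hk]
          simp only [hfa]
          rw [Function.update_comm hkj, hinv k hk', hinvb k hk θ v]
      -- apply induction hypothesis
      obtain ⟨Gb, hGb⟩ := ih fb hafb hinvb
      have hGa' := fun i => ih (fa i) (hafa i) (hinva i)
      choose Ga hGa using hGa'
      -- the splitting equivalence
      set e := Equiv.piSplitAt j (fun k => Option (Fin (D k))) with he
      have fact1 : ∀ (o : Option (Fin (D j))) (q : ∀ k : {k // k ≠ j}, Option (Fin (D k.1))),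
          e.symm (o, q) j = o := by
        intro o q
        simp [he, Equiv.piSplitAt]
      have fact2 : ∀ (o : Option (Fin (D j))) (q : ∀ k : {k // k ≠ j}, Option (Fin (D k.1)))
          (k : J) (h : k ≠ j), e.symm (o, q) k = q ⟨k, h⟩ := by
        intro o q k h
        simp [he, Equiv.piSplitAt, h]
      have fact3 : ∀ (o o' : Option (Fin (D j))) (q : ∀ k : {k // k ≠ j}, Option (Fin (D k.1))),
          Function.update (e.symm (o, q)) j o' = e.symm (o', q) := by
        intro o o' q
        funext k
        by_cases hk : k = j
        · subst hk; rw [Function.update_self, fact1]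
        · rw [Function.update_of_ne hk, fact2 o q k hk, fact2 o' q k hk]
      set G' : (∀ k, Option (Fin (D k))) → ℝ :=
        fun r => (r j).elim (∑ o, Gb (Function.update r j o))
          (fun i => ∑ o, Ga i (Function.update r j o)) with hG'
      refine ⟨G', fun θ => ?_⟩
      -- key reindexing identity
      have keylem : ∀ H : (∀ k, Option (Fin (D k))) → ℝ,
          ∑ q : ∀ k : {k // k ≠ j}, Option (Fin (D k.1)),
            (∑ o : Option (Fin (D j)), H (e.symm (o, q)))
              * ∏ k ∈ t, ((e.symm ((none : Option (Fin (D j))), q)) k).elim 1 (fun i => θ k i)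
          = ∑ r : ∀ k, Option (Fin (D k)), H r * ∏ k ∈ t, (r k).elim 1 (fun i => θ k i) := by
        intro H
        calc ∑ q : ∀ k : {k // k ≠ j}, Option (Fin (D k.1)),
              (∑ o : Option (Fin (D j)), H (e.symm (o, q)))
                * ∏ k ∈ t, ((e.symm ((none : Option (Fin (D j))), q)) k).elim 1 (fun i => θ k i)
            = ∑ q : ∀ k : {k // k ≠ j}, Option (Fin (D k.1)), ∑ o : Option (Fin (D j)),
                H (e.symm (o, q)) * ∏ k ∈ t, ((e.symm (o, q)) k).elim 1 (fun i => θ k i) := by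
              refine Finset.sum_congr rfl fun q _ => ?_
              rw [Finset.sum_mul]
              refine Finset.sum_congr rfl fun o _ => ?_
              congr 1
              refine Finset.prod_congr rfl fun k hk => ?_
              have hkj : k ≠ j := ne_of_mem_of_not_mem hk hj
              rw [fact2 none q k hkj, fact2 o q k hkj]
          _ = ∑ o : Option (Fin (D j)), ∑ q : ∀ k : {k // k ≠ j}, Option (Fin (D k.1)),
                H (e.symm (o, q)) * ∏ k ∈ t, ((e.symm (o, q)) k).elim 1 (fun i => θ k i) :=
              Finset.sum_comm
          _ = ∑ p : Option (Fin (D j)) × (∀ k : {k // k ≠ j}, Option (Fin (D k.1))),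
                H (e.symm p) * ∏ k ∈ t, ((e.symm p) k).elim 1 (fun i => θ k i) :=
              (Fintype.sum_prod_type (f := fun p : Option (Fin (D j)) × (∀ k : {k // k ≠ j}, Option (Fin (D k.1))) => H (e.symm p) * ∏ k ∈ t, ((e.symm p) k).elim 1 (fun i => θ k i))).symm
          _ = ∑ r : ∀ k, Option (Fin (D k)), H r * ∏ k ∈ t, (r k).elim 1 (fun i => θ k i) :=
              Equiv.sum_comp e.symm (fun r => H r * ∏ k ∈ t, (r k).elim 1 (fun i => θ k i))
      have piece_none :
          ∑ q : ∀ k : {k // k ≠ j}, Option (Fin (D k.1)),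
            G' (e.symm ((none : Option (Fin (D j))), q))
              * (1 * ∏ k ∈ t, ((e.symm ((none : Option (Fin (D j))), q)) k).elim 1
                  (fun i => θ k i))
          = fb θ := by
        have hG'none : ∀ q : ∀ k : {k // k ≠ j}, Option (Fin (D k.1)),
            G' (e.symm ((none : Option (Fin (D j))), q))
              = ∑ o : Option (Fin (D j)), Gb (e.symm (o, q)) := by
          intro q
          simp only [hG', fact1, Option.elim]
          exact Finset.sum_congr rfl fun o _ => by rw [fact3]
        calc ∑ q : ∀ k : {k // k ≠ j}, Option (Fin (D k.1)),
              G' (e.symm ((none : Option (Fin (D j))), q))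
                * (1 * ∏ k ∈ t, ((e.symm ((none : Option (Fin (D j))), q)) k).elim 1
                    (fun i => θ k i))
            = ∑ q : ∀ k : {k // k ≠ j}, Option (Fin (D k.1)),
                (∑ o : Option (Fin (D j)), Gb (e.symm (o, q)))
                  * ∏ k ∈ t, ((e.symm ((none : Option (Fin (D j))), q)) k).elim 1
                      (fun i => θ k i) := by
              refine Finset.sum_congr rfl fun q _ => ?_
              rw [hG'none q, one_mul]
          _ = ∑ r : ∀ k, Option (Fin (D k)), Gb r * ∏ k ∈ t, (r k).elim 1 (fun i => θ k i) :=
              keylem Gb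
          _ = fb θ := (hGb θ).symm
      have piece_some : ∀ i : Fin (D j),
          ∑ q : ∀ k : {k // k ≠ j}, Option (Fin (D k.1)),
            G' (e.symm (some i, q))
              * (θ j i * ∏ k ∈ t, ((e.symm (some i, q)) k).elim 1 (fun i => θ k i))
          = fa i θ * θ j i := by
        intro i
        have hG'some : ∀ q : ∀ k : {k // k ≠ j}, Option (Fin (D k.1)),
            G' (e.symm (some i, q)) = ∑ o : Option (Fin (D j)), Ga i (e.symm (o, q)) := by
          intro q
          simp only [hG', fact1, Option.elim]
          exact Finset.sum_congr rfl fun o _ => by rw [fact3]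
        calc ∑ q : ∀ k : {k // k ≠ j}, Option (Fin (D k.1)),
              G' (e.symm (some i, q))
                * (θ j i * ∏ k ∈ t, ((e.symm (some i, q)) k).elim 1 (fun i => θ k i))
            = (∑ q : ∀ k : {k // k ≠ j}, Option (Fin (D k.1)),
                (∑ o : Option (Fin (D j)), Ga i (e.symm (o, q)))
                  * ∏ k ∈ t, ((e.symm ((none : Option (Fin (D j))), q)) k).elim 1
                      (fun i => θ k i)) * θ j i := by
              rw [Finset.sum_mul]
              refine Finset.sum_congr rfl fun q _ => ?_
              rw [hG'some q]
              have hp : ∏ k ∈ t, ((e.symm (some i, q)) k).elim 1 (fun i => θ k i)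
                  = ∏ k ∈ t, ((e.symm ((none : Option (Fin (D j))), q)) k).elim 1
                      (fun i => θ k i) := by
                refine Finset.prod_congr rfl fun k hk => ?_
                have hkj : k ≠ j := ne_of_mem_of_not_mem hk hj
                rw [fact2 (some i) q k hkj, fact2 none q k hkj]
              rw [hp]
              ring
          _ = (∑ r : ∀ k, Option (Fin (D k)),
                Ga i r * ∏ k ∈ t, (r k).elim 1 (fun i => θ k i)) * θ j i := by
              rw [keylem (Ga i)]
          _ = fa i θ * θ j i := by rw [← hGa i θ]
      calc f θ = (∑ i, fa i θ * θ j i) + fb θ := hf θ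
        _ = fb θ + ∑ i, fa i θ * θ j i := by ring
        _ = ∑ r : ∀ k, Option (Fin (D k)),
              G' r * ∏ k ∈ insert j t, (r k).elim 1 (fun i => θ k i) := by
            rw [← piece_none, Eq.comm]
            calc ∑ r : ∀ k, Option (Fin (D k)),
                  G' r * ∏ k ∈ insert j t, (r k).elim 1 (fun i => θ k i)
                = ∑ r : ∀ k, Option (Fin (D k)),
                    G' r * ((r j).elim 1 (fun i => θ j i)
                      * ∏ k ∈ t, (r k).elim 1 (fun i => θ k i)) :=
                  Finset.sum_congr rfl fun r _ => by rw [Finset.prod_insert hj]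
              _ = ∑ o : Option (Fin (D j)), ∑ q : ∀ k : {k // k ≠ j}, Option (Fin (D k.1)),
                    G' (e.symm (o, q)) * (o.elim 1 (fun i => θ j i)
                      * ∏ k ∈ t, ((e.symm (o, q)) k).elim 1 (fun i => θ k i)) := by
                  rw [← Equiv.sum_comp e.symm
                    (fun r => G' r * ((r j).elim 1 (fun i => θ j i)
                      * ∏ k ∈ t, (r k).elim 1 (fun i => θ k i))), Fintype.sum_prod_type]
                  exact Finset.sum_congr rfl fun o _ => Finset.sum_congr rfl fun q _ => by
                    rw [fact1]
              _ = (∑ q : ∀ k : {k // k ≠ j}, Option (Fin (D k.1)),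
                    G' (e.symm ((none : Option (Fin (D j))), q))
                      * (1 * ∏ k ∈ t, ((e.symm ((none : Option (Fin (D j))), q)) k).elim 1
                          (fun i => θ k i)))
                  + ∑ i, ∑ q : ∀ k : {k // k ≠ j}, Option (Fin (D k.1)),
                      G' (e.symm (some i, q))
                        * (θ j i * ∏ k ∈ t, ((e.symm (some i, q)) k).elim 1
                            (fun i => θ k i)) :=
                  Fintype.sum_option _
              _ = (∑ q : ∀ k : {k // k ≠ j}, Option (Fin (D k.1)),
                    G' (e.symm ((none : Option (Fin (D j))), q))
                      * (1 * ∏ k ∈ t, ((e.symm ((none : Option (Fin (D j))), q)) k).elim 1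
                          (fun i => θ k i)))
                  + ∑ i, fa i θ * θ j i := by
                  rw [Finset.sum_congr rfl fun i _ => piece_some i]

/-- **Block-affine functions are multilinear polynomials with at most one factor per block.**
Let `Θ = ∏ j, ℝ^{D j}` and suppose `f : Θ → ℝ` is affine in each block `θ j` when the other
blocks are held fixed. Then there are coefficients `G r`, indexed by tuples
`r : ∀ j, Option (Fin (D j))` (where `r j = none` means the constant factor `1`), such that
`f θ = ∑ r, G r * ∏ j, θ_{j, r j}` for all `θ`. -/
theorem block_affine_polynomial_representation
    {J : Type*} [Fintype J] [DecidableEq J] (D : J → ℕ) (hD : ∀ j, 0 < D j)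
    (f : (∀ j, Fin (D j) → ℝ) → ℝ)
    (haff : ∀ (j : J) (θ : ∀ j, Fin (D j) → ℝ),
      ∃ (a : Fin (D j) → ℝ) (b : ℝ), ∀ v : Fin (D j) → ℝ,
        f (Function.update θ j v) = (∑ i, a i * v i) + b) :
    ∃ G : (∀ j, Option (Fin (D j))) → ℝ,
      ∀ θ : ∀ j, Fin (D j) → ℝ,
        f θ = ∑ r : ∀ j, Option (Fin (D j)), G r * ∏ j, (r j).elim 1 (fun i => θ j i) := by
  have := block_affine_aux D Finset.univ f haff (fun j hj => absurd (Finset.mem_univ j) hj)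
  simpa using this
end

section
/- Let n be a positive integer partitioned into J blocks, and let Λ be an invertible n × n real matrix whose diagonal blocks Λ_{jj} are each invertible. Let μ ∈ ℝⁿ and suppose m ∈ ℝⁿ satisfies, for every block index j, the fixed-point equation m_j = μ_j − Λ_{jj}^{-1} Σ_{k≠j} Λ_{jk}(m_k − μ_k), where m_j, μ_j denote the j-th blocks of m, μ. Then m = μ. -/
open Matrix Finset

/-- **MFVB fixed point for a multivariate normal recovers the true mean.**
Index `n = ∑ j, d j` by pairs `⟨j, a⟩` with `j` a block index and `a` an index within block `j`.
Let `Λ` be an invertible matrix whose diagonal blocks `Λ_{jj}` are invertible, and suppose `m`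
satisfies the block fixed-point equations
`m_j = μ_j − Λ_{jj}⁻¹ ∑_{k ≠ j} Λ_{jk} (m_k − μ_k)` for every `j`. Then `m = μ`. -/
theorem mfvb_normal_fixed_point_mean
    (J : ℕ) (hJ : 0 < J) (d : Fin J → ℕ) (hd : ∀ j, 0 < d j)
    (Λ : Matrix ((j : Fin J) × Fin (d j)) ((j : Fin J) × Fin (d j)) ℝ)
    (hΛ : IsUnit Λ.det)
    (hdiag : ∀ j : Fin J,
      IsUnit (Matrix.of (fun a b : Fin (d j) => Λ ⟨j, a⟩ ⟨j, b⟩)).det)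
    (μ m : ((j : Fin J) × Fin (d j)) → ℝ)
    (hfix : ∀ j : Fin J,
      (fun a : Fin (d j) => m ⟨j, a⟩) =
        (fun a : Fin (d j) => μ ⟨j, a⟩) -
          (Matrix.of (fun a b : Fin (d j) => Λ ⟨j, a⟩ ⟨j, b⟩))⁻¹.mulVec
            (fun a : Fin (d j) =>
              ∑ k ∈ Finset.univ.erase j, ∑ b : Fin (d k),
                Λ ⟨j, a⟩ ⟨k, b⟩ * (m ⟨k, b⟩ - μ ⟨k, b⟩))) :
    m = μ := by
  set x : ((j : Fin J) × Fin (d j)) → ℝ := fun i => m i - μ i with hx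
  have hzero : Λ.mulVec x = 0 := by
    funext i
    obtain ⟨j, a⟩ := i
    -- diag block equation
    have h1 := congrFun (hfix j)
    set D := Matrix.of (fun a b : Fin (d j) => Λ ⟨j, a⟩ ⟨j, b⟩) with hD
    set S : Fin (d j) → ℝ := fun a =>
      ∑ k ∈ Finset.univ.erase j, ∑ b : Fin (d k),
        Λ ⟨j, a⟩ ⟨k, b⟩ * (m ⟨k, b⟩ - μ ⟨k, b⟩) with hS
    have h2 : (fun a : Fin (d j) => x ⟨j, a⟩) = - D⁻¹.mulVec S := by
      funext a
      have := h1 a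
      simp only [Pi.sub_apply] at this
      simp [hx, this]
    have h3 : D.mulVec (fun a : Fin (d j) => x ⟨j, a⟩) = - S := by
      rw [h2, Matrix.mulVec_neg, Matrix.mulVec_mulVec,
        Matrix.mul_nonsing_inv _ (hdiag j), Matrix.one_mulVec]
    have h4 := congrFun h3 a
    -- expand mulVec over sigma
    have hsplit : Λ.mulVec x ⟨j, a⟩ =
        (∑ b : Fin (d j), Λ ⟨j, a⟩ ⟨j, b⟩ * x ⟨j, b⟩) + S a := by
      rw [Matrix.mulVec, dotProduct, ← Finset.univ_sigma_univ, Finset.sum_sigma]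
      rw [← Finset.add_sum_erase (univ : Finset (Fin J))
        (fun k => ∑ b : Fin (d k), Λ ⟨j, a⟩ ⟨k, b⟩ * x ⟨k, b⟩) (mem_univ j)]
    have hD4 : D.mulVec (fun a : Fin (d j) => x ⟨j, a⟩) a =
        ∑ b : Fin (d j), Λ ⟨j, a⟩ ⟨j, b⟩ * x ⟨j, b⟩ := by
      simp [Matrix.mulVec, dotProduct, hD]
    rw [hD4] at h4
    rw [Pi.zero_apply, hsplit, h4]
    simp
  have : x = 0 := by
    have := congrArg Λ⁻¹.mulVec hzero
    rwa [Matrix.mulVec_mulVec, Matrix.nonsing_inv_mul _ hΛ, Matrix.one_mulVec,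
      Matrix.mulVec_zero] at this
  funext i
  have := congrFun this i
  simp only [hx, Pi.zero_apply] at this
  linarith
end

section
/- Let V_α, H_α be a × a real matrices, V_z, H_z be b × b real matrices, and H_{αz} (a × b), H_{zα} (b × a) real matrices. Form the block matrices V := fromBlocks V_α 0 0 V_z and H := fromBlocks H_α H_{αz} H_{zα} H_z of size (a+b) × (a+b). Assume I − VH is invertible, I_z − V_z H_z is invertible, and K := I_α − V_α H_α − V_α H_{αz} (I_z − V_z H_z)^{-1} V_z H_{zα} is invertible. Then the upper-left a × a block of (I − VH)^{-1} V equals K^{-1} V_α. -/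
open Matrix

/-- **Schur-complement formula for the interest-parameter block of the LRVB covariance.**
With `V = fromBlocks Vα 0 0 Vz` and `H = fromBlocks Hα Hαz Hzα Hz`, if `I − V H`,
`I_z − Vz Hz`, and `K := I_α − Vα Hα − Vα Hαz (I_z − Vz Hz)⁻¹ Vz Hzα` are invertible, then
the upper-left block of `(I − V H)⁻¹ V` equals `K⁻¹ Vα`. -/
theorem lrvb_schur_complement_block
    {a b : ℕ}
    (Vα Hα : Matrix (Fin a) (Fin a) ℝ) (Vz Hz : Matrix (Fin b) (Fin b) ℝ)
    (Hαz : Matrix (Fin a) (Fin b) ℝ) (Hzα : Matrix (Fin b) (Fin a) ℝ)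
    (V H : Matrix (Fin a ⊕ Fin b) (Fin a ⊕ Fin b) ℝ)
    (hV : V = Matrix.fromBlocks Vα 0 0 Vz)
    (hH : H = Matrix.fromBlocks Hα Hαz Hzα Hz)
    (hVH : IsUnit (1 - V * H).det)
    (hz : IsUnit (1 - Vz * Hz).det)
    (K : Matrix (Fin a) (Fin a) ℝ)
    (hK : K = 1 - Vα * Hα - Vα * Hαz * (1 - Vz * Hz)⁻¹ * Vz * Hzα)
    (hKu : IsUnit K.det) :
    ((1 - V * H)⁻¹ * V).toBlocks₁₁ = K⁻¹ * Vα := by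
  subst hV hH
  set A : Matrix (Fin a) (Fin a) ℝ := 1 - Vα * Hα with hA
  set B : Matrix (Fin a) (Fin b) ℝ := Vα * Hαz with hB
  set C : Matrix (Fin b) (Fin a) ℝ := Vz * Hzα with hC
  set D : Matrix (Fin b) (Fin b) ℝ := 1 - Vz * Hz with hD
  have hDD : D * D⁻¹ = 1 := mul_nonsing_inv D hz
  have hKK : K * K⁻¹ = 1 := mul_nonsing_inv K hKu
  have hKeq : K = A - B * D⁻¹ * C := by
    rw [hK, hA, hB, hC, hD]
    simp only [Matrix.mul_assoc, sub_sub]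
  have hM : (1 : Matrix (Fin a ⊕ Fin b) (Fin a ⊕ Fin b) ℝ) -
      Matrix.fromBlocks Vα 0 0 Vz * Matrix.fromBlocks Hα Hαz Hzα Hz
      = Matrix.fromBlocks A (-B) (-C) D := by
    rw [Matrix.fromBlocks_multiply]
    ext i j
    cases i <;> cases j <;>
      simp [hA, hB, hC, hD, Matrix.one_apply, Matrix.sub_apply]
  clear_value A B C D
  clear hA hB hC hD hK
  have e11 : A * K⁻¹ + -B * (D⁻¹ * C * K⁻¹) = 1 := by
    have h : A * K⁻¹ + -B * (D⁻¹ * C * K⁻¹) = (A - B * D⁻¹ * C) * K⁻¹ := by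
      simp only [Matrix.sub_mul, Matrix.add_mul, Matrix.neg_mul, Matrix.mul_assoc,
        sub_eq_add_neg]
    rw [h, ← hKeq, hKK]
  have e12 : A * (K⁻¹ * B * D⁻¹) + -B * (D⁻¹ + D⁻¹ * C * K⁻¹ * B * D⁻¹) = 0 := by
    have h : A * (K⁻¹ * B * D⁻¹) + -B * (D⁻¹ + D⁻¹ * C * K⁻¹ * B * D⁻¹)
        = (A - B * D⁻¹ * C) * (K⁻¹ * (B * D⁻¹)) - B * D⁻¹ := by
      simp only [Matrix.sub_mul, Matrix.add_mul, Matrix.neg_mul, Matrix.mul_add,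
        Matrix.mul_assoc, sub_eq_add_neg, neg_add]
      abel
    rw [h, ← hKeq, ← Matrix.mul_assoc, hKK, Matrix.one_mul, sub_self]
  have e21 : -C * K⁻¹ + D * (D⁻¹ * C * K⁻¹) = 0 := by
    have h : D * (D⁻¹ * C * K⁻¹) = D * D⁻¹ * (C * K⁻¹) := by
      simp only [Matrix.mul_assoc]
    rw [h, hDD, Matrix.one_mul, Matrix.neg_mul]
    abel
  have e22 : -C * (K⁻¹ * B * D⁻¹) + D * (D⁻¹ + D⁻¹ * C * K⁻¹ * B * D⁻¹) = 1 := by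
    have h : D * (D⁻¹ + D⁻¹ * C * K⁻¹ * B * D⁻¹)
        = D * D⁻¹ + D * D⁻¹ * (C * (K⁻¹ * (B * D⁻¹))) := by
      simp only [Matrix.mul_add, Matrix.mul_assoc]
    rw [h, hDD, Matrix.one_mul, Matrix.neg_mul]
    simp only [Matrix.mul_assoc]
    abel
  have hMX : Matrix.fromBlocks A (-B) (-C) D *
      Matrix.fromBlocks K⁻¹ (K⁻¹ * B * D⁻¹) (D⁻¹ * C * K⁻¹)
        (D⁻¹ + D⁻¹ * C * K⁻¹ * B * D⁻¹) = 1 := by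
    rw [Matrix.fromBlocks_multiply, e11, e12, e21, e22, Matrix.fromBlocks_one]
  rw [hM, Matrix.inv_eq_right_inv hMX, Matrix.fromBlocks_multiply]
  simp [Matrix.toBlocks_fromBlocks₁₁]
end

section
/- Let m : ℝ → ℝ be twice differentiable with |m''(u)| ≤ C for all u ∈ ℝ, and let X be a real-valued random variable with E[X] = x, E[X²] < ∞, and E[|X − x|³] < ∞. Then |E[(m(X) − m(x))(X − x)] − m'(x) · Var(X)| ≤ (C/2) · E[|X − x|³]. In particular, since E[X − x] = 0, E[(m(X) − m(x))(X − x)] = Cov(m(X), X), so |Cov(m(X), X) − m'(x) Var(X)| ≤ (C/2) E[|X − x|³]. -/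
open MeasureTheory Real intervalIntegral

lemma taylor_key (m m' m'' : ℝ → ℝ) (C : ℝ)
    (hd1 : ∀ u, HasDerivAt m (m' u) u)
    (hd2 : ∀ u, HasDerivAt m' (m'' u) u)
    (hC : ∀ u, |m'' u| ≤ C) (x u : ℝ) :
    |m u - m x - m' x * (u - x)| ≤ C / 2 * (u - x) ^ 2 := by
  have hC0 : 0 ≤ C := le_trans (abs_nonneg _) (hC 0)
  have lip : LipschitzWith C.toNNReal m' := by
    apply lipschitzWith_of_nnnorm_deriv_le (fun v => (hd2 v).differentiableAt)
    intro v
    rw [(hd2 v).deriv, ← NNReal.coe_le_coe, coe_nnnorm, Real.coe_toNNReal C hC0]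
    simpa [Real.norm_eq_abs] using hC v
  have hlip : ∀ t, |m' t - m' x| ≤ C * |t - x| := by
    intro t
    have := lip.dist_le_mul t x
    rwa [Real.dist_eq, Real.dist_eq, Real.coe_toNNReal C hC0] at this
  have hcont : Continuous m' := by
    have : Differentiable ℝ m' := fun v => (hd2 v).differentiableAt
    exact this.continuous
  have hftc : ∫ t in x..u, (m' t - m' x) = m u - m x - m' x * (u - x) := by
    have h1 : ∀ t ∈ Set.uIcc x u, HasDerivAt (fun t => m t - m' x * t) (m' t - m' x) t := by
      intro t _
      exact ((hd1 t).sub ((hasDerivAt_id t).const_mul (m' x))).congr_deriv (by ring)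
    have h2 : IntervalIntegrable (fun t => m' t - m' x) MeasureTheory.volume x u :=
      (hcont.sub continuous_const).intervalIntegrable x u
    rw [intervalIntegral.integral_eq_sub_of_hasDerivAt h1 h2]
    ring
  rw [← hftc]
  rcases le_total x u with hxu | hxu
  · have hI : IntervalIntegrable (fun t => m' t - m' x) MeasureTheory.volume x u :=
      (hcont.sub continuous_const).intervalIntegrable x u
    have hI2 : IntervalIntegrable (fun t => C * (t - x)) MeasureTheory.volume x u :=
      (continuous_const.mul (continuous_id.sub continuous_const)).intervalIntegrable x u
    have hcomp : ∫ t in x..u, C * (t - x) = C / 2 * (u - x) ^ 2 := by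
      rw [intervalIntegral.integral_const_mul]
      have : ∫ t in x..u, (t - x) = ∫ t in (x-x)..(u-x), t := by
        simpa using (intervalIntegral.integral_comp_sub_right (fun t => t) x (a := x) (b := u))
      rw [this]
      simp [integral_id]
      ring
    rw [abs_le]
    refine ⟨?_, ?_⟩
    · have hmono := intervalIntegral.integral_mono_on hxu hI2.neg hI (fun t ht => by
        show -(C * (t - x)) ≤ m' t - m' x
        have h1 := abs_le.mp (hlip t)
        have habs : |t - x| = t - x := abs_of_nonneg (by linarith [ht.1])
        rw [habs] at h1
        linarith [h1.1])
      simp only [Pi.neg_apply] at hmono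
      rw [intervalIntegral.integral_neg, hcomp] at hmono
      linarith
    · have hmono := intervalIntegral.integral_mono_on hxu hI hI2 (fun t ht => by
        show m' t - m' x ≤ C * (t - x)
        have h1 := abs_le.mp (hlip t)
        have habs : |t - x| = t - x := abs_of_nonneg (by linarith [ht.1])
        rw [habs] at h1
        linarith [h1.2])
      rw [hcomp] at hmono
      linarith
  · have hI : IntervalIntegrable (fun t => m' t - m' x) MeasureTheory.volume u x :=
      (hcont.sub continuous_const).intervalIntegrable u x
    have hI2 : IntervalIntegrable (fun t => C * (x - t)) MeasureTheory.volume u x :=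
      (continuous_const.mul (continuous_const.sub continuous_id)).intervalIntegrable u x
    have hcomp : ∫ t in u..x, C * (x - t) = C / 2 * (u - x) ^ 2 := by
      rw [intervalIntegral.integral_const_mul]
      have : ∫ t in u..x, (x - t) = ∫ t in (x-x)..(x-u), t := by
        simpa using (intervalIntegral.integral_comp_sub_left (fun t => t) x (a := u) (b := x))
      rw [this]
      simp [integral_id]
      ring
    rw [intervalIntegral.integral_symm, abs_neg, abs_le]
    refine ⟨?_, ?_⟩
    · have hmono := intervalIntegral.integral_mono_on hxu hI2.neg hI (fun t ht => by
        show -(C * (x - t)) ≤ m' t - m' x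
        have h1 := abs_le.mp (hlip t)
        have habs : |t - x| = x - t := by rw [abs_sub_comm]; exact abs_of_nonneg (by linarith [ht.2])
        rw [habs] at h1
        linarith [h1.1])
      simp only [Pi.neg_apply] at hmono
      rw [intervalIntegral.integral_neg, hcomp] at hmono
      linarith
    · have hmono := intervalIntegral.integral_mono_on hxu hI hI2 (fun t ht => by
        show m' t - m' x ≤ C * (x - t)
        have h1 := abs_le.mp (hlip t)
        have habs : |t - x| = x - t := by rw [abs_sub_comm]; exact abs_of_nonneg (by linarith [ht.2])
        rw [habs] at h1
        linarith [h1.2])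
      rw [hcomp] at hmono
      linarith

/-- **Taylor-expansion bound relating the influence score to a covariance.**
Let `m : ℝ → ℝ` be twice differentiable with `|m''| ≤ C`, and let `X` be a random variable
with mean `x`, finite second moment, and finite third absolute central moment. Then
`|E[(m(X) − m(x))(X − x)] − m'(x)·Var(X)| ≤ (C/2)·E[|X − x|³]`; moreover, since
`E[X − x] = 0`, the quantity `E[(m(X) − m(x))(X − x)]` equals `Cov(m(X), X)`. -/
theorem influence_score_taylor_bound
    {Ω : Type*} [MeasurableSpace Ω] (P : Measure Ω) [IsProbabilityMeasure P]
    (m m' m'' : ℝ → ℝ) (C : ℝ)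
    (hd1 : ∀ u, HasDerivAt m (m' u) u)
    (hd2 : ∀ u, HasDerivAt m' (m'' u) u)
    (hC : ∀ u, |m'' u| ≤ C)
    (X : Ω → ℝ) (hXmeas : Measurable X) (x : ℝ)
    (hX1 : Integrable X P) (hmean : ∫ ω, X ω ∂P = x)
    (hX2 : Integrable (fun ω => (X ω) ^ 2) P)
    (hX3 : Integrable (fun ω => |X ω - x| ^ 3) P) :
    |(∫ ω, (m (X ω) - m x) * (X ω - x) ∂P)
        - m' x * ∫ ω, (X ω - x) ^ 2 ∂P|
      ≤ C / 2 * ∫ ω, |X ω - x| ^ 3 ∂P ∧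
    (∫ ω, (m (X ω) - m x) * (X ω - x) ∂P)
      = ∫ ω, (m (X ω) - ∫ ω', m (X ω') ∂P) * (X ω - x) ∂P := by
  have hC0 : 0 ≤ C := le_trans (abs_nonneg _) (hC 0)
  have hmd : Differentiable ℝ m := fun v => (hd1 v).differentiableAt
  have hmc : Continuous m := hmd.continuous
  -- integrability of (X - x)^2
  have hXx2 : Integrable (fun ω => (X ω - x) ^ 2) P := by
    have : (fun ω => (X ω - x) ^ 2) = fun ω => (X ω) ^ 2 - (2 * x) * X ω + x ^ 2 := by
      funext ω; ring
    rw [this]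
    exact ((hX2.sub (hX1.const_mul (2 * x))).add (integrable_const _))
  -- pointwise Taylor bound
  have hpt : ∀ ω, |(m (X ω) - m x) * (X ω - x) - m' x * (X ω - x) ^ 2|
      ≤ C / 2 * |X ω - x| ^ 3 := by
    intro ω
    have h := taylor_key m m' m'' C hd1 hd2 hC x (X ω)
    have heq : (m (X ω) - m x) * (X ω - x) - m' x * (X ω - x) ^ 2
        = (m (X ω) - m x - m' x * (X ω - x)) * (X ω - x) := by ring
    rw [heq, abs_mul]
    calc |m (X ω) - m x - m' x * (X ω - x)| * |X ω - x|
        ≤ (C / 2 * (X ω - x) ^ 2) * |X ω - x| :=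
          mul_le_mul_of_nonneg_right h (abs_nonneg _)
      _ = C / 2 * |X ω - x| ^ 3 := by
          rw [← sq_abs (X ω - x)]; ring
  -- integrability of the product
  have hprod : Integrable (fun ω => (m (X ω) - m x) * (X ω - x)) P := by
    apply Integrable.mono' ((hXx2.const_mul (|m' x|)).add (hX3.const_mul (C / 2)))
    · exact ((hmc.measurable.comp hXmeas).sub measurable_const).aestronglyMeasurable.mul
        ((hXmeas.sub measurable_const)).aestronglyMeasurable
    · filter_upwards with ω
      have h := hpt ω
      have h2 : |(m (X ω) - m x) * (X ω - x)|
          ≤ |m' x * (X ω - x) ^ 2| + |(m (X ω) - m x) * (X ω - x) - m' x * (X ω - x) ^ 2| := by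
        calc |(m (X ω) - m x) * (X ω - x)|
            = |m' x * (X ω - x) ^ 2 + ((m (X ω) - m x) * (X ω - x) - m' x * (X ω - x) ^ 2)| := by
              ring_nf
          _ ≤ _ := abs_add_le _ _
      rw [Real.norm_eq_abs]
      calc |(m (X ω) - m x) * (X ω - x)|
          ≤ |m' x * (X ω - x) ^ 2| + |(m (X ω) - m x) * (X ω - x) - m' x * (X ω - x) ^ 2| := h2
        _ ≤ |m' x| * (X ω - x) ^ 2 + C / 2 * |X ω - x| ^ 3 := by
            rw [abs_mul, abs_of_nonneg (sq_nonneg (X ω - x))]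
            exact add_le_add le_rfl h
  constructor
  · have hsub : (∫ ω, (m (X ω) - m x) * (X ω - x) ∂P) - m' x * ∫ ω, (X ω - x) ^ 2 ∂P
        = ∫ ω, ((m (X ω) - m x) * (X ω - x) - m' x * (X ω - x) ^ 2) ∂P := by
      rw [integral_sub hprod (hXx2.const_mul (m' x)), MeasureTheory.integral_const_mul]
    rw [hsub]
    calc |∫ ω, ((m (X ω) - m x) * (X ω - x) - m' x * (X ω - x) ^ 2) ∂P|
        ≤ ∫ ω, |(m (X ω) - m x) * (X ω - x) - m' x * (X ω - x) ^ 2| ∂P :=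
          by simpa [Real.norm_eq_abs] using
            MeasureTheory.norm_integral_le_integral_norm
              (fun ω => (m (X ω) - m x) * (X ω - x) - m' x * (X ω - x) ^ 2)
      _ ≤ ∫ ω, C / 2 * |X ω - x| ^ 3 ∂P := by
          apply integral_mono (hprod.sub (hXx2.const_mul (m' x))).abs (hX3.const_mul (C / 2))
          exact hpt
      _ = C / 2 * ∫ ω, |X ω - x| ^ 3 ∂P := MeasureTheory.integral_const_mul _ _
  · have hXc : Integrable (fun ω => X ω - x) P := hX1.sub (integrable_const x)
    have hXc0 : ∫ ω, (X ω - x) ∂P = 0 := by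
      rw [integral_sub hX1 (integrable_const x)]
      simp [hmean]
    set c := ∫ ω', m (X ω') ∂P with hc
    have hsplit : ∀ ω, (m (X ω) - c) * (X ω - x)
        = (m (X ω) - m x) * (X ω - x) + (m x - c) * (X ω - x) := by
      intro ω; ring
    rw [show (fun ω => (m (X ω) - c) * (X ω - x))
        = fun ω => (m (X ω) - m x) * (X ω - x) + (m x - c) * (X ω - x) from funext hsplit]
    rw [integral_add hprod (hXc.const_mul (m x - c)), MeasureTheory.integral_const_mul, hXc0]
    ring
end

section
/- Let m : ℝ → ℝ be twice differentiable with bounded second derivative, fix x ∈ ℝ and s > 0, and for each ε > 0 let X_ε be a real-valued random variable with E[X_ε] = x, Var(X_ε) = ε s, and E[|X_ε − x|³] ≤ K ε^{3/2} for a constant K independent of ε. Then lim_{ε → 0⁺} (1/ε) Cov(m(X_ε), X_ε) = s · m'(x). -/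
open MeasureTheory Real Filter

/-- **Influence-score identity.**
Let `m : ℝ → ℝ` be twice differentiable with bounded second derivative, fix `x ∈ ℝ` and `s > 0`,
and for each `ε > 0` let `X ε` be a random variable with mean `x`, variance `ε s`, and third
absolute central moment at most `K ε^{3/2}`. Then
`(1/ε) Cov(m(X ε), X ε) → s · m'(x)` as `ε → 0⁺`. -/
theorem influence_score_limit
    {Ω : Type*} [MeasurableSpace Ω] (P : Measure Ω) [IsProbabilityMeasure P]
    (m m' m'' : ℝ → ℝ) (C : ℝ)
    (hd1 : ∀ u, HasDerivAt m (m' u) u)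
    (hd2 : ∀ u, HasDerivAt m' (m'' u) u)
    (hC : ∀ u, |m'' u| ≤ C)
    (x s : ℝ) (hs : 0 < s) (K : ℝ)
    (X : ℝ → Ω → ℝ)
    (hmeas : ∀ ε > (0 : ℝ), Measurable (X ε))
    (hint : ∀ ε > (0 : ℝ), Integrable (X ε) P)
    (hmean : ∀ ε > (0 : ℝ), ∫ ω, X ε ω ∂P = x)
    (hvar : ∀ ε > (0 : ℝ), Integrable (fun ω => (X ε ω - x) ^ 2) P ∧
      ∫ ω, (X ε ω - x) ^ 2 ∂P = ε * s)
    (hthird : ∀ ε > (0 : ℝ), Integrable (fun ω => |X ε ω - x| ^ 3) P ∧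
      ∫ ω, |X ε ω - x| ^ 3 ∂P ≤ K * ε ^ ((3 : ℝ) / 2)) :
    Tendsto
      (fun ε : ℝ =>
        (1 / ε) * ∫ ω, (m (X ε ω) - ∫ ω', m (X ε ω') ∂P) * (X ε ω - x) ∂P)
      (nhdsWithin 0 (Set.Ioi 0)) (nhds (s * m' x)) := by
  have hC0 : 0 ≤ C := le_trans (abs_nonneg _) (hC x)
  have hmcont : Continuous m := by
    rw [continuous_iff_continuousAt]; exact fun u => (hd1 u).continuousAt
  -- `m'` is `C`-Lipschitz
  have hlip : ∀ u v : ℝ, |m' u - m' v| ≤ C * |u - v| := by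
    intro u v
    have := Convex.norm_image_sub_le_of_norm_hasDerivWithin_le
      (f := m') (f' := m'') (s := Set.univ) (C := C)
      (fun y _ => (hd2 y).hasDerivWithinAt)
      (fun y _ => by simpa [Real.norm_eq_abs] using hC y)
      convex_univ (Set.mem_univ v) (Set.mem_univ u)
    simpa [Real.norm_eq_abs] using this
  -- Taylor remainder
  set R : ℝ → ℝ := fun u => m u - m x - m' x * (u - x) with hRdef
  have hRcont : Continuous R := by
    exact (hmcont.sub continuous_const).sub
      (continuous_const.mul ((continuous_id.sub continuous_const)))
  have hRderiv : ∀ u, HasDerivAt R (m' u - m' x) u := by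
    intro u
    have h1 : HasDerivAt (fun v : ℝ => m x + m' x * (v - x)) (m' x) u := by
      simpa using (((hasDerivAt_id u).sub_const x).const_mul (m' x)).const_add (m x)
    have h2 := (hd1 u).sub h1
    exact h2.congr_of_eventuallyEq (Filter.Eventually.of_forall fun v => by simp only [R, Pi.sub_apply]; ring)
  have hRx : R x = 0 := by simp [R]
  have hRbound : ∀ u, |R u| ≤ C * (u - x) ^ 2 := by
    intro u
    rcases lt_trichotomy u x with h | h | h
    · obtain ⟨c, hc, hcs⟩ := exists_hasDerivAt_eq_slope R (fun v => m' v - m' x) h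
        (fun v _ => (hRderiv v).continuousAt.continuousWithinAt)
        (fun v _ => hRderiv v)
      have hux : u - x ≠ 0 := sub_ne_zero.2 h.ne
      have hxu : x - u ≠ 0 := sub_ne_zero.2 h.ne'
      have hRu : R u = -((m' c - m' x) * (x - u)) := by
        rw [hRx] at hcs; rw [hcs]; field_simp; ring
      have hcx : |c - x| ≤ |u - x| := by
        rw [abs_sub_comm c x, abs_sub_comm u x]
        rw [abs_of_nonneg (by linarith [hc.2] : (0:ℝ) ≤ x - c),
          abs_of_nonneg (by linarith : (0:ℝ) ≤ x - u)]
        linarith [hc.1]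
      calc |R u| = |m' c - m' x| * |x - u| := by rw [hRu, abs_neg, abs_mul]
        _ ≤ (C * |c - x|) * |x - u| := by
            exact mul_le_mul_of_nonneg_right (hlip c x) (abs_nonneg _)
        _ ≤ (C * |u - x|) * |u - x| := by
            rw [abs_sub_comm x u]
            exact mul_le_mul_of_nonneg_right
              (mul_le_mul_of_nonneg_left hcx hC0) (abs_nonneg _)
        _ = C * (u - x) ^ 2 := by rw [mul_assoc, abs_mul_abs_self, ← sq]
    · subst h; simp [hRx]
    · obtain ⟨c, hc, hcs⟩ := exists_hasDerivAt_eq_slope R (fun v => m' v - m' x) h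
        (fun v _ => (hRderiv v).continuousAt.continuousWithinAt)
        (fun v _ => hRderiv v)
      have hux : u - x ≠ 0 := sub_ne_zero.2 h.ne'
      have hRu : R u = (m' c - m' x) * (u - x) := by
        rw [hRx] at hcs; rw [hcs]; field_simp; ring
      have hcx : |c - x| ≤ |u - x| := by
        rw [abs_of_nonneg (by linarith [hc.1] : (0:ℝ) ≤ c - x),
          abs_of_nonneg (by linarith : (0:ℝ) ≤ u - x)]
        linarith [hc.2]
      calc |R u| = |m' c - m' x| * |u - x| := by rw [hRu, abs_mul]
        _ ≤ (C * |c - x|) * |u - x| := by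
            exact mul_le_mul_of_nonneg_right (hlip c x) (abs_nonneg _)
        _ ≤ (C * |u - x|) * |u - x| := by
            exact mul_le_mul_of_nonneg_right
              (mul_le_mul_of_nonneg_left hcx hC0) (abs_nonneg _)
        _ = C * (u - x) ^ 2 := by rw [mul_assoc, abs_mul_abs_self, ← sq]
  -- key per-epsilon bound
  have hbound : ∀ ε ∈ Set.Ioi (0:ℝ),
      |(1 / ε) * (∫ ω, (m (X ε ω) - ∫ ω', m (X ε ω') ∂P) * (X ε ω - x) ∂P) - s * m' x|
        ≤ C * K * ε ^ ((1 : ℝ) / 2) := by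
    intro ε hε
    have hε' : (0:ℝ) < ε := hε
    have hY : Measurable (X ε) := hmeas ε hε'
    have hYint : Integrable (X ε) P := hint ε hε'
    have h2 : Integrable (fun ω => (X ε ω - x) ^ 2) P := (hvar ε hε').1
    have h2v : ∫ ω, (X ε ω - x) ^ 2 ∂P = ε * s := (hvar ε hε').2
    have h3 : Integrable (fun ω => |X ε ω - x| ^ 3) P := (hthird ε hε').1
    have h3v : ∫ ω, |X ε ω - x| ^ 3 ∂P ≤ K * ε ^ ((3 : ℝ) / 2) := (hthird ε hε').2
    have hYx : Integrable (fun ω => X ε ω - x) P := hYint.sub (integrable_const x)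
    have hintYx : ∫ ω, (X ε ω - x) ∂P = 0 := by
      rw [integral_sub hYint (integrable_const x), hmean ε hε', integral_const]
      simp
    -- integrability of the pieces
    have hRmeas : AEStronglyMeasurable (fun ω => R (X ε ω)) P :=
      (hRcont.measurable.comp hY).aestronglyMeasurable
    have hRYx : Integrable (fun ω => R (X ε ω) * (X ε ω - x)) P := by
      refine Integrable.mono' (h3.const_mul C)
        (hRmeas.mul ((hY.sub measurable_const).aestronglyMeasurable)) ?_
      filter_upwards with ω
      rw [Real.norm_eq_abs, abs_mul]
      calc |R (X ε ω)| * |X ε ω - x|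
          ≤ (C * (X ε ω - x) ^ 2) * |X ε ω - x| :=
            mul_le_mul_of_nonneg_right (hRbound _) (abs_nonneg _)
        _ = C * |X ε ω - x| ^ 3 := by
            rw [← sq_abs]; ring
    have hmY : Integrable (fun ω => m (X ε ω)) P := by
      refine Integrable.mono'
        (((integrable_const (|m x|)).add (hYx.abs.const_mul (|m' x|))).add (h2.const_mul C))
        ((hmcont.measurable.comp hY).aestronglyMeasurable) ?_
      filter_upwards with ω
      have hdecomp : m (X ε ω) = m x + m' x * (X ε ω - x) + R (X ε ω) := by
        simp only [R]; ring
      rw [Real.norm_eq_abs, hdecomp]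
      calc |m x + m' x * (X ε ω - x) + R (X ε ω)|
          ≤ |m x| + |m' x * (X ε ω - x)| + |R (X ε ω)| := by
            exact (abs_add_le _ _).trans (add_le_add_left (abs_add_le _ _) _)
        _ ≤ |m x| + |m' x| * |X ε ω - x| + C * (X ε ω - x) ^ 2 := by
            rw [abs_mul]
            exact add_le_add_right (hRbound _) _
    set a : ℝ := ∫ ω', m (X ε ω') ∂P with ha
    have p1 : Integrable (fun ω => (m x - a) * (X ε ω - x)) P := hYx.const_mul _
    have p2 : Integrable (fun ω => m' x * (X ε ω - x) ^ 2) P := h2.const_mul _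
    have key : ∫ ω, (m (X ε ω) - a) * (X ε ω - x) ∂P
        = m' x * (ε * s) + ∫ ω, R (X ε ω) * (X ε ω - x) ∂P := by
      have hpt : ∀ ω, (m (X ε ω) - a) * (X ε ω - x)
          = (m x - a) * (X ε ω - x)
            + (m' x * (X ε ω - x) ^ 2 + R (X ε ω) * (X ε ω - x)) := by
        intro ω; simp only [R]; ring
      have q23 : Integrable (fun ω => m' x * (X ε ω - x) ^ 2 + R (X ε ω) * (X ε ω - x)) P :=
        p2.add hRYx
      rw [integral_congr_ae (Filter.Eventually.of_forall hpt),
        integral_add p1 q23, integral_add p2 hRYx,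
        integral_const_mul, integral_const_mul, hintYx, h2v]
      ring
    have hI3 : |∫ ω, R (X ε ω) * (X ε ω - x) ∂P| ≤ C * (K * ε ^ ((3 : ℝ) / 2)) := by
      have step1 := norm_integral_le_integral_norm
        (fun ω => R (X ε ω) * (X ε ω - x)) (μ := P)
      simp only [Real.norm_eq_abs] at step1
      refine step1.trans ?_
      have step2 : ∫ ω, |R (X ε ω) * (X ε ω - x)| ∂P ≤ ∫ ω, C * |X ε ω - x| ^ 3 ∂P := by
        refine integral_mono hRYx.abs (h3.const_mul C) ?_
        intro ω
        show |R (X ε ω) * (X ε ω - x)| ≤ C * |X ε ω - x| ^ 3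
        rw [abs_mul]
        calc |R (X ε ω)| * |X ε ω - x|
            ≤ (C * (X ε ω - x) ^ 2) * |X ε ω - x| :=
              mul_le_mul_of_nonneg_right (hRbound _) (abs_nonneg _)
          _ = C * |X ε ω - x| ^ 3 := by rw [← sq_abs]; ring
      refine step2.trans ?_
      rw [integral_const_mul]
      exact mul_le_mul_of_nonneg_left h3v hC0
    have hεne : ε ≠ 0 := hε'.ne'
    have hval : (1 / ε) * (∫ ω, (m (X ε ω) - a) * (X ε ω - x) ∂P) - s * m' x
        = (1 / ε) * ∫ ω, R (X ε ω) * (X ε ω - x) ∂P := by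
      rw [key]; field_simp; ring
    rw [hval, abs_mul, abs_of_nonneg (by positivity : (0:ℝ) ≤ 1 / ε)]
    have hrpow : (1 / ε) * (C * (K * ε ^ ((3 : ℝ) / 2))) = C * K * ε ^ ((1 : ℝ) / 2) := by
      have : ε ^ ((3 : ℝ) / 2) = ε * ε ^ ((1 : ℝ) / 2) := by
        rw [show (3 : ℝ) / 2 = 1 + 1 / 2 by norm_num, Real.rpow_add hε', Real.rpow_one]
      rw [this]; field_simp
    calc (1 / ε) * |∫ ω, R (X ε ω) * (X ε ω - x) ∂P|
        ≤ (1 / ε) * (C * (K * ε ^ ((3 : ℝ) / 2))) :=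
          mul_le_mul_of_nonneg_left hI3 (by positivity)
      _ = C * K * ε ^ ((1 : ℝ) / 2) := hrpow
  -- squeeze
  rw [tendsto_iff_norm_sub_tendsto_zero]
  have hlim : Tendsto (fun ε : ℝ => C * K * ε ^ ((1 : ℝ) / 2))
      (nhdsWithin 0 (Set.Ioi 0)) (nhds 0) := by
    have h0 : Tendsto (fun ε : ℝ => ε ^ ((1 : ℝ) / 2)) (nhds (0:ℝ)) (nhds 0) := by
      have := (Real.continuousAt_rpow_const 0 ((1:ℝ)/2) (Or.inr (by norm_num))).tendsto
      simpa using this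
    have := Filter.Tendsto.const_mul (C * K) (h0.mono_left (nhdsWithin_le_nhds : nhdsWithin (0:ℝ) (Set.Ioi 0) ≤ nhds 0))
    simpa using this
  refine squeeze_zero' ?_ ?_ hlim
  · filter_upwards with ε using norm_nonneg _
  · exact eventually_nhdsWithin_of_forall (fun ε hε => by
      simpa [Real.norm_eq_abs] using hbound ε hε)
end

section
/- Let V_α, H_α be a × a, S, H_x be p × p, V_z, H_z be b × b real matrices, together with rectangular matrices H_{αx}, H_{αz}, H_{xα}, H_{xz}, H_{zα}, H_{zx} of the compatible sizes, forming the 3 × 3 block matrix H with block rows (H_α, H_{αx}, H_{αz}), (H_{xα}, H_x, H_{xz}), (H_{zα}, H_{zx}, H_z). For ε > 0 let V(ε) be the block-diagonal matrix with blocks V_α, εS, V_z. Assume I_z − V_z H_z is invertible and A := I_α − V_α H_α − V_α H_{αz}(I_z − V_z H_z)^{-1} V_z H_{zα} is invertible. Then there is ε₀ > 0 such that for all 0 < ε < ε₀ the matrix I − V(ε)H is invertible, and the upper-left a × a block of Σ(ε) := (I − V(ε)H)^{-1} V(ε) converges, as ε → 0⁺, to A^{-1} V_α. -/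
open Matrix Filter

private lemma fromBlocks_sub' {l m n o : Type*} (A A' : Matrix n l ℝ) (B B' : Matrix n m ℝ)
    (C C' : Matrix o l ℝ) (D D' : Matrix o m ℝ) :
    Matrix.fromBlocks A B C D - Matrix.fromBlocks A' B' C' D' =
      Matrix.fromBlocks (A - A') (B - B') (C - C') (D - D') := by
  ext (i | i) (j | j) <;> simp [Matrix.fromBlocks]

private lemma toBlocks₁₁_mul_fromBlocks' {n o l m : Type*} [Fintype n] [Fintype o]
    (X : Matrix (l ⊕ m) (n ⊕ o) ℝ) (A : Matrix n n ℝ) (B : Matrix n o ℝ)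
    (C : Matrix o n ℝ) (D : Matrix o o ℝ) :
    (X * Matrix.fromBlocks A B C D).toBlocks₁₁ = X.toBlocks₁₁ * A + X.toBlocks₁₂ * C := by
  conv_lhs => rw [← Matrix.fromBlocks_toBlocks X]
  rw [Matrix.fromBlocks_multiply, Matrix.toBlocks_fromBlocks₁₁]

private lemma toBlocks₁₁_eq_submatrix {n o l m : Type*} (M : Matrix (n ⊕ o) (l ⊕ m) ℝ) :
    M.toBlocks₁₁ = M.submatrix Sum.inl Sum.inl := rfl

/-- **Infinitesimal data perturbation does not change the LRVB covariance of the parameters.**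
With three blocks `α` (interest, size `a`), `x` (perturbed data, size `p`), `z` (nuisance,
size `b`), let `H` be the full `3 × 3` block Hessian and `V ε` the block-diagonal variational
covariance with blocks `Vα`, `ε S`, `Vz`. If `I_z − Vz Hz` and
`A := I_α − Vα Hα − Vα Hαz (I_z − Vz Hz)⁻¹ Vz Hzα` are invertible, then for all sufficiently
small `ε > 0` the matrix `I − V(ε) H` is invertible, and the upper-left `a × a` block of
`Σ(ε) := (I − V(ε)H)⁻¹ V(ε)` converges to `A⁻¹ Vα` as `ε → 0⁺`. -/
theorem lrvb_perturbed_alpha_block_limit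
    {a p b : ℕ}
    (Vα Hα : Matrix (Fin a) (Fin a) ℝ) (S Hx : Matrix (Fin p) (Fin p) ℝ)
    (Vz Hz : Matrix (Fin b) (Fin b) ℝ)
    (Hαx : Matrix (Fin a) (Fin p) ℝ) (Hαz : Matrix (Fin a) (Fin b) ℝ)
    (Hxα : Matrix (Fin p) (Fin a) ℝ) (Hxz : Matrix (Fin p) (Fin b) ℝ)
    (Hzα : Matrix (Fin b) (Fin a) ℝ) (Hzx : Matrix (Fin b) (Fin p) ℝ)
    (H : Matrix (Fin a ⊕ (Fin p ⊕ Fin b)) (Fin a ⊕ (Fin p ⊕ Fin b)) ℝ)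
    (hH : H = Matrix.fromBlocks Hα (Matrix.fromCols Hαx Hαz)
      (Matrix.fromRows Hxα Hzα) (Matrix.fromBlocks Hx Hxz Hzx Hz))
    (V : ℝ → Matrix (Fin a ⊕ (Fin p ⊕ Fin b)) (Fin a ⊕ (Fin p ⊕ Fin b)) ℝ)
    (hV : ∀ ε, V ε = Matrix.fromBlocks Vα 0 0 (Matrix.fromBlocks (ε • S) 0 0 Vz))
    (hz : IsUnit (1 - Vz * Hz).det)
    (A : Matrix (Fin a) (Fin a) ℝ)
    (hA : A = 1 - Vα * Hα - Vα * Hαz * (1 - Vz * Hz)⁻¹ * Vz * Hzα)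
    (hAu : IsUnit A.det) :
    (∃ ε₀ > (0 : ℝ), ∀ ε : ℝ, 0 < ε → ε < ε₀ → IsUnit (1 - V ε * H).det) ∧
    Tendsto (fun ε : ℝ => ((1 - V ε * H)⁻¹ * V ε).toBlocks₁₁)
      (nhdsWithin 0 (Set.Ioi 0)) (nhds (A⁻¹ * Vα)) := by
  set K : Matrix (Fin b) (Fin b) ℝ := 1 - Vz * Hz with hKdef
  haveI instK : Invertible K := K.invertibleOfIsUnitDet hz
  have hV0 : V 0 = Matrix.fromBlocks Vα 0 0 (Matrix.fromBlocks 0 0 0 Vz) := by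
    rw [hV]; simp
  set E : Matrix (Fin a ⊕ (Fin p ⊕ Fin b)) (Fin a ⊕ (Fin p ⊕ Fin b)) ℝ :=
    Matrix.fromBlocks 0 0 0 (Matrix.fromBlocks S 0 0 0) with hEdef
  have hVE : ∀ ε : ℝ, V ε = V 0 + ε • E := by
    intro ε
    rw [hV, hV0, hEdef, Matrix.fromBlocks_smul, Matrix.fromBlocks_smul]
    simp only [smul_zero]
    rw [Matrix.fromBlocks_add, Matrix.fromBlocks_add]
    simp
  -- block structure of 1 - V 0 * H
  set P : Matrix (Fin a) (Fin a) ℝ := 1 - Vα * Hα with hPdef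
  set Q : Matrix (Fin a) (Fin p ⊕ Fin b) ℝ :=
    -(Matrix.fromCols (Vα * Hαx) (Vα * Hαz)) with hQdef
  set R : Matrix (Fin p ⊕ Fin b) (Fin a) ℝ :=
    -(Matrix.fromRows 0 (Vz * Hzα)) with hRdef
  set T : Matrix (Fin p ⊕ Fin b) (Fin p ⊕ Fin b) ℝ :=
    Matrix.fromBlocks 1 0 (-(Vz * Hzx)) K with hTdef
  have hM0 : (1 : Matrix (Fin a ⊕ (Fin p ⊕ Fin b)) (Fin a ⊕ (Fin p ⊕ Fin b)) ℝ) - V 0 * H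
      = Matrix.fromBlocks P Q R T := by
    rw [hV0, hH, Matrix.fromBlocks_multiply, ← Matrix.fromBlocks_one, fromBlocks_sub']
    rw [hPdef, hQdef, hRdef, hTdef, Matrix.fromBlocks_inj]
    refine ⟨by simp, by simp [Matrix.mul_fromCols], by simp [Matrix.fromBlocks_mul_fromRows], ?_⟩
    rw [Matrix.fromBlocks_multiply]
    simp only [Matrix.zero_mul, zero_add, add_zero]
    rw [← Matrix.fromBlocks_one, fromBlocks_sub']
    simp [hKdef]
  haveI instT : Invertible T := by
    rw [hTdef]
    haveI : Invertible (1 : Matrix (Fin p) (Fin p) ℝ) := invertibleOne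
    exact Matrix.fromBlocksZero₁₂Invertible 1 (-(Vz * Hzx)) K
  have hTinv : T⁻¹ = Matrix.fromBlocks 1 0 (K⁻¹ * (Vz * Hzx)) K⁻¹ := by
    haveI : Invertible (1 : Matrix (Fin p) (Fin p) ℝ) := invertibleOne
    haveI : Invertible (Matrix.fromBlocks 1 0 (-(Vz * Hzx)) K) := hTdef ▸ instT
    rw [hTdef, ← Matrix.invOf_eq_nonsing_inv, Matrix.invOf_fromBlocks_zero₁₂_eq]
    simp [Matrix.invOf_eq_nonsing_inv, Matrix.mul_neg, Matrix.neg_mul]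
  have hSchur : P - Q * T⁻¹ * R = A := by
    rw [hTinv, hPdef, hQdef, hRdef, hA]
    simp only [Matrix.neg_mul, Matrix.mul_neg, neg_neg, Matrix.fromCols_mul_fromBlocks,
      Matrix.fromCols_mul_fromRows, Matrix.mul_zero, Matrix.zero_mul, Matrix.mul_one,
      add_zero, zero_add, Matrix.mul_assoc, hPdef]
  have hSchur' : P - Q * ⅟T * R = A := by
    rw [Matrix.invOf_eq_nonsing_inv]; exact hSchur
  haveI instS : Invertible (P - Q * ⅟T * R) :=
    Matrix.invertibleOfIsUnitDet _ (by rw [hSchur']; exact hAu)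
  haveI instM : Invertible (Matrix.fromBlocks P Q R T) := Matrix.fromBlocks₂₂Invertible P Q R T
  have hdetM0 : IsUnit ((1 : Matrix (Fin a ⊕ (Fin p ⊕ Fin b)) _ ℝ) - V 0 * H).det := by
    rw [hM0]; exact Matrix.isUnit_det_of_invertible _
  have hinv11 : (((1 : Matrix (Fin a ⊕ (Fin p ⊕ Fin b)) _ ℝ) - V 0 * H)⁻¹).toBlocks₁₁ = A⁻¹ := by
    rw [hM0, ← Matrix.invOf_eq_nonsing_inv, Matrix.invOf_fromBlocks₂₂_eq,
      Matrix.toBlocks_fromBlocks₁₁, Matrix.invOf_eq_nonsing_inv, hSchur']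
  have hval : (((1 : Matrix (Fin a ⊕ (Fin p ⊕ Fin b)) _ ℝ) - V 0 * H)⁻¹ * V 0).toBlocks₁₁
      = A⁻¹ * Vα := by
    have hrw : ((1 : Matrix (Fin a ⊕ (Fin p ⊕ Fin b)) _ ℝ) - V 0 * H)⁻¹ * V 0
        = ((1 : Matrix (Fin a ⊕ (Fin p ⊕ Fin b)) _ ℝ) - V 0 * H)⁻¹
          * Matrix.fromBlocks Vα 0 0 (Matrix.fromBlocks 0 0 0 Vz) := by rw [← hV0]
    rw [hrw, toBlocks₁₁_mul_fromBlocks', hinv11, Matrix.mul_zero, add_zero]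
  -- continuity
  set N : ℝ → Matrix (Fin a ⊕ (Fin p ⊕ Fin b)) (Fin a ⊕ (Fin p ⊕ Fin b)) ℝ :=
    fun ε => 1 - (V 0 + ε • E) * H with hNdef
  have hN : ∀ ε, 1 - V ε * H = N ε := fun ε => by rw [hNdef, hVE ε]
  have hN0 : N 0 = 1 - V 0 * H := by simp [hNdef]
  have hcontN : Continuous N := by
    apply continuous_const.sub
    exact ((continuous_const.add (continuous_id.smul continuous_const)).matrix_mul
      continuous_const)
  have hdet0 : (N 0).det ≠ 0 := by rw [hN0]; exact hdetM0.ne_zero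
  constructor
  · have hev : ∀ᶠ ε in nhds (0 : ℝ), (N ε).det ≠ 0 :=
      (hcontN.matrix_det.continuousAt).eventually_ne hdet0
    rw [Metric.eventually_nhds_iff] at hev
    obtain ⟨δ, hδ, hball⟩ := hev
    refine ⟨δ, hδ, fun ε hε hεδ => ?_⟩
    rw [hN ε]
    refine isUnit_iff_ne_zero.mpr (hball ?_)
    rw [Real.dist_eq, sub_zero, abs_of_pos hε]
    exact hεδ
  · have hfun : (fun ε : ℝ => ((1 - V ε * H)⁻¹ * V ε).toBlocks₁₁)
        = fun ε : ℝ => ((((N ε).det)⁻¹ • (N ε).adjugate) * (V 0 + ε • E)).toBlocks₁₁ := by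
      funext ε
      rw [← hVE ε, hN ε, Matrix.inv_def, Ring.inverse_eq_inv']
    rw [hfun]
    have hcont : ContinuousAt
        (fun ε : ℝ => ((((N ε).det)⁻¹ • (N ε).adjugate) * (V 0 + ε • E)).toBlocks₁₁) 0 := by
      have h1 : ContinuousAt (fun ε : ℝ => ((N ε).det)⁻¹) 0 :=
        (hcontN.matrix_det.continuousAt).inv₀ hdet0
      have h2 : ContinuousAt (fun ε : ℝ => (N ε).adjugate) 0 :=
        hcontN.matrix_adjugate.continuousAt
      have h3 : ContinuousAt (fun ε : ℝ => V 0 + ε • E) 0 :=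
        (continuous_const.add (continuous_id.smul continuous_const)).continuousAt
      have h4 : ContinuousAt
          (fun ε : ℝ => (((N ε).det)⁻¹ • (N ε).adjugate) * (V 0 + ε • E)) 0 :=
        (h1.smul h2).mul h3
      have h5 : Continuous fun M : Matrix (Fin a ⊕ (Fin p ⊕ Fin b)) (Fin a ⊕ (Fin p ⊕ Fin b)) ℝ
          => M.toBlocks₁₁ := by
        simp only [toBlocks₁₁_eq_submatrix]
        exact continuous_id.matrix_submatrix Sum.inl Sum.inl
      exact h5.continuousAt.comp h4
    have h0 : ((((N 0).det)⁻¹ • (N 0).adjugate) * (V 0 + (0:ℝ) • E)).toBlocks₁₁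
        = A⁻¹ * Vα := by
      simp only [zero_smul, add_zero, hN0]
      rw [← Ring.inverse_eq_inv', ← Matrix.inv_def]
      exact hval
    refine Tendsto.mono_left ?_ nhdsWithin_le_nhds
    rw [← h0]
    exact hcont.tendsto
end

section
/- Let V_α, H_α be a × a, S, H_x be p × p, V_z, H_z be b × b real matrices, together with rectangular matrices H_{αx}, H_{αz}, H_{xα}, H_{xz}, H_{zα}, H_{zx} of the compatible sizes, forming the 3 × 3 block matrix H with block rows (H_α, H_{αx}, H_{αz}), (H_{xα}, H_x, H_{xz}), (H_{zα}, H_{zx}, H_z). For ε > 0 let V(ε) be the block-diagonal matrix with blocks V_α, εS, V_z, and let Σ(ε) := (I − V(ε)H)^{-1} V(ε) (defined for all sufficiently small ε > 0). Assume I_z − V_z H_z is invertible and A := I_α − V_α H_α − V_α H_{αz}(I_z − V_z H_z)^{-1} V_z H_{zα} is invertible. Then, as ε → 0⁺, (1/ε) times the (α, x) block (the upper-middle a × p block) of Σ(ε) converges to A^{-1} (V_α H_{αx} + V_α H_{αz}(I_z − V_z H_z)^{-1} V_z H_{zx}) S. -/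
open Matrix Filter

set_option maxHeartbeats 1600000

private lemma myFromColumns_sub {m n₁ n₂ : Type*} (A A' : Matrix m n₁ ℝ) (B B' : Matrix m n₂ ℝ) :
    fromCols A B - fromCols A' B' = fromCols (A - A') (B - B') := by
  ext i (j | j) <;> rfl

private lemma myFromRows_sub {m₁ m₂ n : Type*} (A A' : Matrix m₁ n ℝ) (B B' : Matrix m₂ n ℝ) :
    fromRows A B - fromRows A' B' = fromRows (A - A') (B - B') := by
  ext (i | i) j <;> rfl

private lemma myFromColumns_add {m n₁ n₂ : Type*} (A A' : Matrix m n₁ ℝ) (B B' : Matrix m n₂ ℝ) :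
    fromCols A B + fromCols A' B' = fromCols (A + A') (B + B') := by
  ext i (j | j) <;> rfl

private lemma myFromRows_add {m₁ m₂ n : Type*} (A A' : Matrix m₁ n ℝ) (B B' : Matrix m₂ n ℝ) :
    fromRows A B + fromRows A' B' = fromRows (A + A') (B + B') := by
  ext (i | i) j <;> rfl

private lemma myFromBlocks_sub {n m o l : Type*} (A A' : Matrix n l ℝ) (B B' : Matrix n m ℝ)
    (C C' : Matrix o l ℝ) (D D' : Matrix o m ℝ) :
    fromBlocks A B C D - fromBlocks A' B' C' D' =
      fromBlocks (A - A') (B - B') (C - C') (D - D') := by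
  ext (i | i) (j | j) <;> simp

/-- **LRVB influence-score formula.**
With three blocks `α` (interest, size `a`), `x` (perturbed data, size `p`), `z` (nuisance,
size `b`), let `H` be the full `3 × 3` block Hessian, `V ε` the block-diagonal variational
covariance with blocks `Vα`, `ε S`, `Vz`, and `Σ(ε) := (I − V(ε)H)⁻¹ V(ε)`. If `I_z − Vz Hz`
and `A := I_α − Vα Hα − Vα Hαz (I_z − Vz Hz)⁻¹ Vz Hzα` are invertible, then as `ε → 0⁺`,
`(1/ε)` times the `(α, x)` block of `Σ(ε)` converges to
`A⁻¹ (Vα Hαx + Vα Hαz (I_z − Vz Hz)⁻¹ Vz Hzx) S`. -/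
theorem lrvb_influence_score_limit
    {a p b : ℕ}
    (Vα Hα : Matrix (Fin a) (Fin a) ℝ) (S Hx : Matrix (Fin p) (Fin p) ℝ)
    (Vz Hz : Matrix (Fin b) (Fin b) ℝ)
    (Hαx : Matrix (Fin a) (Fin p) ℝ) (Hαz : Matrix (Fin a) (Fin b) ℝ)
    (Hxα : Matrix (Fin p) (Fin a) ℝ) (Hxz : Matrix (Fin p) (Fin b) ℝ)
    (Hzα : Matrix (Fin b) (Fin a) ℝ) (Hzx : Matrix (Fin b) (Fin p) ℝ)
    (H : Matrix (Fin a ⊕ (Fin p ⊕ Fin b)) (Fin a ⊕ (Fin p ⊕ Fin b)) ℝ)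
    (hH : H = Matrix.fromBlocks Hα (Matrix.fromCols Hαx Hαz)
      (Matrix.fromRows Hxα Hzα) (Matrix.fromBlocks Hx Hxz Hzx Hz))
    (V : ℝ → Matrix (Fin a ⊕ (Fin p ⊕ Fin b)) (Fin a ⊕ (Fin p ⊕ Fin b)) ℝ)
    (hV : ∀ ε, V ε = Matrix.fromBlocks Vα 0 0 (Matrix.fromBlocks (ε • S) 0 0 Vz))
    (Sig : ℝ → Matrix (Fin a ⊕ (Fin p ⊕ Fin b)) (Fin a ⊕ (Fin p ⊕ Fin b)) ℝ)
    (hSig : ∀ ε, Sig ε = (1 - V ε * H)⁻¹ * V ε)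
    (hz : IsUnit (1 - Vz * Hz).det)
    (A : Matrix (Fin a) (Fin a) ℝ)
    (hA : A = 1 - Vα * Hα - Vα * Hαz * (1 - Vz * Hz)⁻¹ * Vz * Hzα)
    (hAu : IsUnit A.det) :
    Tendsto
      (fun ε : ℝ => (1 / ε) •
        Matrix.of (fun (i : Fin a) (j : Fin p) => Sig ε (Sum.inl i) (Sum.inr (Sum.inl j))))
      (nhdsWithin 0 (Set.Ioi 0))
      (nhds (A⁻¹ * (Vα * Hαx + Vα * Hαz * (1 - Vz * Hz)⁻¹ * Vz * Hzx) * S)) := by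
  classical
  have hW1 : (1 - Vz * Hz) * (1 - Vz * Hz)⁻¹ = 1 := Matrix.mul_nonsing_inv _ hz
  have hA1 : A * A⁻¹ = 1 := Matrix.mul_nonsing_inv _ hAu
  set W : Matrix (Fin b) (Fin b) ℝ := (1 - Vz * Hz)⁻¹ with hWdef
  have hAK : ∀ {m : Type} (K : Matrix (Fin a) m ℝ), A * (A⁻¹ * K) = K := by
    intro m K; rw [← Matrix.mul_assoc, hA1, Matrix.one_mul]
  have hWK : ∀ {m : Type} (K : Matrix (Fin b) m ℝ), (1 - Vz * Hz) * (W * K) = K := by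
    intro m K; rw [← Matrix.mul_assoc, hW1, Matrix.one_mul]
  set Nαx : Matrix (Fin a) (Fin p) ℝ := A⁻¹ * (Vα * Hαx + Vα * Hαz * W * Vz * Hzx) with hNαx
  set Nαz : Matrix (Fin a) (Fin b) ℝ := A⁻¹ * (Vα * Hαz * W) with hNαz
  set Nzα : Matrix (Fin b) (Fin a) ℝ := W * (Vz * Hzα * A⁻¹) with hNzα
  set Nzx : Matrix (Fin b) (Fin p) ℝ := W * (Vz * Hzα * Nαx + Vz * Hzx) with hNzx
  set Nzz : Matrix (Fin b) (Fin b) ℝ := W * (Vz * Hzα * Nαz + 1) with hNzz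
  set N : Matrix (Fin a ⊕ (Fin p ⊕ Fin b)) (Fin a ⊕ (Fin p ⊕ Fin b)) ℝ :=
    Matrix.fromBlocks A⁻¹ (Matrix.fromCols Nαx Nαz) (Matrix.fromRows 0 Nzα)
      (Matrix.fromBlocks 1 0 Nzx Nzz) with hN
  -- The matrix M(0) = 1 - V 0 * H, as explicit blocks
  have hM0 : (1 : Matrix (Fin a ⊕ (Fin p ⊕ Fin b)) (Fin a ⊕ (Fin p ⊕ Fin b)) ℝ) - V 0 * H =
      Matrix.fromBlocks (1 - Vα * Hα)
        (Matrix.fromCols (-(Vα * Hαx)) (-(Vα * Hαz)))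
        (Matrix.fromRows 0 (-(Vz * Hzα)))
        (Matrix.fromBlocks 1 0 (-(Vz * Hzx)) (1 - Vz * Hz)) := by
    rw [hV 0, hH, zero_smul]
    rw [Matrix.fromBlocks_multiply, Matrix.mul_fromCols, Matrix.fromBlocks_mul_fromRows,
      Matrix.fromBlocks_multiply]
    simp only [Matrix.zero_mul, Matrix.mul_zero, add_zero, zero_add]
    rw [← Matrix.fromBlocks_one, myFromBlocks_sub]
    rw [← Matrix.fromCols_zero, myFromColumns_sub,
      ← Matrix.fromRows_zero, myFromRows_sub, ← Matrix.fromBlocks_one, myFromBlocks_sub]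
    simp only [zero_sub, sub_zero]
  -- N is a right inverse of M(0)
  have e1 : (1 - Vα * Hα) * A⁻¹ + ((-(Vα * Hαx)) * (0 : Matrix (Fin p) (Fin a) ℝ)
      + (-(Vα * Hαz)) * Nzα) = 1 := by
    have expand1 : (1 - Vα * Hα) * A⁻¹ + ((-(Vα * Hαx)) * (0 : Matrix (Fin p) (Fin a) ℝ)
        + (-(Vα * Hαz)) * Nzα) =
        (1 - Vα * Hα - Vα * Hαz * W * Vz * Hzα) * A⁻¹ := by
      rw [hNzα]
      simp only [sub_mul, Matrix.sub_mul, Matrix.neg_mul, Matrix.one_mul, Matrix.mul_zero,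
        zero_add, Matrix.mul_assoc]
      abel
    rw [expand1, ← hA, hA1]
  have e2 : (1 - Vα * Hα) * Nαx + ((-(Vα * Hαx)) * (1 : Matrix (Fin p) (Fin p) ℝ)
      + (-(Vα * Hαz)) * Nzx) = 0 := by
    have expand2 : (1 - Vα * Hα) * Nαx + ((-(Vα * Hαx)) * (1 : Matrix (Fin p) (Fin p) ℝ)
        + (-(Vα * Hαz)) * Nzx) =
        A * Nαx - (Vα * Hαx + Vα * Hαz * W * Vz * Hzx) := by
      rw [hNzx, hA]
      simp only [sub_mul, add_mul, Matrix.sub_mul, Matrix.add_mul, Matrix.mul_add, Matrix.neg_mul, Matrix.one_mul,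
        Matrix.mul_one, Matrix.mul_assoc, sub_eq_add_neg, neg_add]
      abel
    rw [expand2, hNαx, hAK, sub_self]
  have e3 : (1 - Vα * Hα) * Nαz + ((-(Vα * Hαx)) * (0 : Matrix (Fin p) (Fin b) ℝ)
      + (-(Vα * Hαz)) * Nzz) = 0 := by
    have expand3 : (1 - Vα * Hα) * Nαz + ((-(Vα * Hαx)) * (0 : Matrix (Fin p) (Fin b) ℝ)
        + (-(Vα * Hαz)) * Nzz) = A * Nαz - Vα * Hαz * W := by
      rw [hNzz, hA]
      simp only [sub_mul, add_mul, Matrix.sub_mul, Matrix.add_mul, Matrix.mul_add, Matrix.neg_mul, Matrix.one_mul,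
        Matrix.mul_zero, Matrix.mul_one, Matrix.mul_assoc, sub_eq_add_neg, neg_add]
      abel
    rw [expand3, hNαz, hAK, sub_self]
  have e4 : (-(Vz * Hzα)) * A⁻¹ + ((-(Vz * Hzx)) * (0 : Matrix (Fin p) (Fin a) ℝ)
      + (1 - Vz * Hz) * Nzα) = 0 := by
    rw [hNzα, hWK]
    simp only [Matrix.neg_mul, Matrix.mul_zero, zero_add]
    abel
  have e5 : (-(Vz * Hzα)) * Nαx + ((-(Vz * Hzx)) * (1 : Matrix (Fin p) (Fin p) ℝ)
      + (1 - Vz * Hz) * Nzx) = 0 := by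
    rw [hNzx, hWK]
    simp only [Matrix.neg_mul, Matrix.mul_one]
    abel
  have e6 : (-(Vz * Hzα)) * Nαz + ((-(Vz * Hzx)) * (0 : Matrix (Fin p) (Fin b) ℝ)
      + (1 - Vz * Hz) * Nzz) = 1 := by
    rw [hNzz, hWK]
    simp only [Matrix.neg_mul, Matrix.mul_zero, zero_add]
    abel
  have hMN : ((1 : Matrix (Fin a ⊕ (Fin p ⊕ Fin b)) (Fin a ⊕ (Fin p ⊕ Fin b)) ℝ) - V 0 * H) * N
      = 1 := by
    rw [hM0, hN]
    simp only [Matrix.fromBlocks_multiply, Matrix.mul_fromCols,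
      Matrix.fromCols_mul_fromRows, Matrix.fromCols_mul_fromBlocks,
      Matrix.fromRows_mul, Matrix.fromBlocks_mul_fromRows, Matrix.fromRows_mul_fromCols,
      Matrix.fromCols_fromRows_eq_fromBlocks]
    rw [myFromColumns_add, myFromRows_add, Matrix.fromBlocks_add, e1, e2, e3, e4, e5, e6]
    simp only [Matrix.zero_mul, Matrix.mul_zero, Matrix.mul_one, Matrix.one_mul, add_zero,
      zero_add, Matrix.fromCols_zero, Matrix.fromRows_zero, Matrix.fromBlocks_one]
  have hMinv : ((1 : Matrix (Fin a ⊕ (Fin p ⊕ Fin b)) (Fin a ⊕ (Fin p ⊕ Fin b)) ℝ)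
      - V 0 * H)⁻¹ = N := Matrix.inv_eq_right_inv hMN
  have hdet0 : ((1 : Matrix (Fin a ⊕ (Fin p ⊕ Fin b)) (Fin a ⊕ (Fin p ⊕ Fin b)) ℝ)
      - V 0 * H).det ≠ 0 := by
    intro h
    have := congrArg Matrix.det hMN
    rw [Matrix.det_mul, Matrix.det_one, h, zero_mul] at this
    exact zero_ne_one this
  -- continuity
  have hVc : Continuous V := by
    have hfun : V = fun ε => Matrix.fromBlocks Vα 0 0 (Matrix.fromBlocks (ε • S) 0 0 Vz) :=
      funext hV
    rw [hfun]
    refine continuous_matrix fun i j => ?_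
    rcases i with i | (i | i) <;> rcases j with j | (j | j) <;>
      simp only [Matrix.fromBlocks_apply₁₁, Matrix.fromBlocks_apply₁₂,
        Matrix.fromBlocks_apply₂₁, Matrix.fromBlocks_apply₂₂, Matrix.zero_apply,
        Matrix.smul_apply, smul_eq_mul] <;>
      fun_prop
  have hMc : Continuous fun ε : ℝ =>
      (1 : Matrix (Fin a ⊕ (Fin p ⊕ Fin b)) (Fin a ⊕ (Fin p ⊕ Fin b)) ℝ) - V ε * H :=
    continuous_const.sub (hVc.matrix_mul continuous_const)
  have hIc : ContinuousAt (fun ε : ℝ =>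
      ((1 : Matrix (Fin a ⊕ (Fin p ⊕ Fin b)) (Fin a ⊕ (Fin p ⊕ Fin b)) ℝ) - V ε * H)⁻¹) 0 := by
    have heq : (fun ε : ℝ =>
        ((1 : Matrix (Fin a ⊕ (Fin p ⊕ Fin b)) (Fin a ⊕ (Fin p ⊕ Fin b)) ℝ) - V ε * H)⁻¹) =
        fun ε => ((1 - V ε * H).det)⁻¹ • (1 - V ε * H).adjugate := by
      funext ε
      rw [Matrix.inv_def, Ring.inverse_eq_inv']
    rw [heq]
    exact (((hMc.matrix_det).continuousAt).inv₀ hdet0).smul ((hMc.matrix_adjugate).continuousAt)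
  have hsubC : Continuous fun M : Matrix (Fin a ⊕ (Fin p ⊕ Fin b)) (Fin a ⊕ (Fin p ⊕ Fin b)) ℝ =>
      M.submatrix Sum.inl (fun j : Fin p => Sum.inr (Sum.inl j)) * S :=
    ((continuous_matrix fun i j => continuous_id.matrix_elem _ _).matrix_mul continuous_const)
  have hc : ContinuousAt (fun ε : ℝ =>
      ((1 - V ε * H)⁻¹).submatrix Sum.inl (fun j : Fin p => Sum.inr (Sum.inl j)) * S) 0 :=
    hsubC.continuousAt.comp hIc
  -- the value at 0
  have hval : ((1 - V 0 * H)⁻¹).submatrix Sum.inl (fun j : Fin p => Sum.inr (Sum.inl j)) * S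
      = Nαx * S := by
    rw [hMinv]
    have hsubN : N.submatrix Sum.inl (fun j : Fin p => Sum.inr (Sum.inl j)) = Nαx := by
      ext i j
      simp [hN, Matrix.fromCols]
    rw [hsubN]
  -- the function agrees with the submatrix function on (0, ∞)
  have key : ∀ ε : ℝ, ε ≠ 0 →
      ((1 - V ε * H)⁻¹).submatrix Sum.inl (fun j : Fin p => Sum.inr (Sum.inl j)) * S =
      (1 / ε) • Matrix.of (fun (i : Fin a) (j : Fin p) =>
        Sig ε (Sum.inl i) (Sum.inr (Sum.inl j))) := by
    intro ε hε
    ext i j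
    rw [hSig ε, hV ε]
    simp only [Matrix.smul_apply, Matrix.of_apply, Matrix.mul_apply, Matrix.submatrix_apply,
      smul_eq_mul, Fintype.sum_sum_type, Matrix.fromBlocks_apply₁₂, Matrix.fromBlocks_apply₂₂,
      Matrix.fromBlocks_apply₁₁, Matrix.fromBlocks_apply₂₁, Matrix.zero_apply, mul_zero,
      Finset.sum_const_zero, add_zero, zero_add]
    rw [Finset.mul_sum]
    refine Finset.sum_congr rfl fun k _ => ?_
    field_simp
  -- conclude
  have hlim : Tendsto (fun ε : ℝ =>
      ((1 - V ε * H)⁻¹).submatrix Sum.inl (fun j : Fin p => Sum.inr (Sum.inl j)) * S)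
      (nhdsWithin 0 (Set.Ioi 0)) (nhds (Nαx * S)) := by
    rw [← hval]
    exact (hc.tendsto).mono_left nhdsWithin_le_nhds
  refine hlim.congr' ?_
  filter_upwards [self_mem_nhdsWithin] with ε hε
  exact key ε (ne_of_gt hε)
end
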